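/- arXiv:1803.07642 — 13 statements merged into one kernel-verified Lean document; each statement's English description precedes it below -/
import Mathlib

section
/- Trilateration lemma: Let v₀, …, v_m be affinely independent points of EuclideanSpace ℝ (Fin m) spanning the m-simplex σ (their convex hull), with longest edge length L and thickness t. Let 0 ≤ ξ ≤ 1 and let F : σ → EuclideanSpace ℝ (Fin m) be a ξ-distortion map on σ (i.e. |‖F x − F y‖ − ‖x − y‖| ≤ ξ·‖x − y‖ for all x, y ∈ σ) that fixes every vertex: F vᵢ = vᵢ for all i. Then for every x ∈ σ, ‖x − F x‖ ≤ 3ξL/t. -/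
open RealInnerProductSpace

/-- **Trilateration lemma.** If `F` is a `ξ`-distortion map on an `m`-simplex
`σ ⊆ ℝᵐ` with longest edge length `L` and thickness `t`, fixing all vertices,
then `‖x - F x‖ ≤ 3ξL/t` for all `x ∈ σ`. -/
theorem trilateration {m : ℕ} (hm : 1 ≤ m)
    (v : Fin (m + 1) → EuclideanSpace ℝ (Fin m))
    (hv : AffineIndependent ℝ v)
    (σ : Set (EuclideanSpace ℝ (Fin m)))
    (hσ : σ = convexHull ℝ (Set.range v))
    (L a t : ℝ)
    (hL : IsGreatest {d : ℝ | ∃ i k : Fin (m + 1), i ≠ k ∧ d = ‖v i - v k‖} L)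
    (ha : IsLeast {d : ℝ | ∃ i : Fin (m + 1),
      d = Metric.infDist (v i) (affineSpan ℝ (v '' {i}ᶜ) : Set (EuclideanSpace ℝ (Fin m)))} a)
    (ht : t = a / (m * L))
    (ξ : ℝ) (hξ0 : 0 ≤ ξ) (hξ1 : ξ ≤ 1)
    (F : EuclideanSpace ℝ (Fin m) → EuclideanSpace ℝ (Fin m))
    (hdistort : ∀ x ∈ σ, ∀ y ∈ σ, |‖F x - F y‖ - ‖x - y‖| ≤ ξ * ‖x - y‖)
    (hfix : ∀ i, F (v i) = v i) :
    ∀ x ∈ σ, ‖x - F x‖ ≤ 3 * ξ * L / t := by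
  intro x hx
  have hvinj : Function.Injective v := hv.injective
  have hmem : ∀ j, v j ∈ σ := fun j => hσ ▸ subset_convexHull ℝ _ (Set.mem_range_self j)
  -- L > 0
  have hL0 : 0 < L := by
    obtain ⟨i, k, hik, hLik⟩ := hL.1
    have hne : v i - v k ≠ 0 := sub_ne_zero_of_ne fun h => hik (hvinj h)
    rw [hLik]
    exact norm_pos_iff.mpr hne
  -- distance from any point of σ to each vertex is ≤ L
  have hxL : ∀ j, ∀ y ∈ σ, ‖y - v j‖ ≤ L := by
    intro j y hy
    have hsub : σ ⊆ Metric.closedBall (v j) L := by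
      rw [hσ]
      refine convexHull_min ?_ (convex_closedBall _ _)
      rintro z ⟨k, rfl⟩
      rcases eq_or_ne k j with rfl | hkj
      · simp [hL0.le]
      · have h := hL.2 ⟨k, j, hkj, rfl⟩
        simpa [Metric.mem_closedBall, dist_eq_norm] using h
    have := hsub hy
    simpa [Metric.mem_closedBall, dist_eq_norm] using this
  -- a > 0
  have ha0 : 0 < a := by
    obtain ⟨i, hai⟩ := ha.1
    rw [hai]
    have hnm : v i ∉ (affineSpan ℝ (v '' {i}ᶜ) : Set (EuclideanSpace ℝ (Fin m))) := by
      have := hv.notMem_affineSpan_diff i Set.univ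
      simpa [Set.compl_eq_univ_diff] using this
    have hcl : IsClosed (affineSpan ℝ (v '' {i}ᶜ) : Set (EuclideanSpace ℝ (Fin m))) :=
      AffineSubspace.closed_of_finiteDimensional _
    obtain ⟨j, hji⟩ : ∃ j : Fin (m + 1), j ≠ i := by
      rcases eq_or_ne i 0 with rfl | h0
      · exact ⟨⟨1, by omega⟩, by simp [Fin.ext_iff]⟩
      · exact ⟨0, Ne.symm h0⟩
    have hne : (affineSpan ℝ (v '' {i}ᶜ) : Set (EuclideanSpace ℝ (Fin m))).Nonempty :=
      ⟨v j, subset_affineSpan ℝ _ ⟨j, hji, rfl⟩⟩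
    exact (hcl.notMem_iff_infDist_pos hne).mp hnm
  -- the edge vectors
  set e : EuclideanSpace ℝ (Fin m) := x - F x with he
  set w : Fin m → EuclideanSpace ℝ (Fin m) := fun i => v i.succ - v 0 with hw
  have hli : LinearIndependent ℝ w := by
    have h1 := (affineIndependent_iff_linearIndependent_vsub ℝ v 0).mp hv
    let eqv : Fin m ≃ { y : Fin (m + 1) // y ≠ 0 } :=
      { toFun := fun i => ⟨i.succ, Fin.succ_ne_zero i⟩
        invFun := fun j => (j : Fin (m + 1)).pred j.2
        left_inv := fun i => by simp
        right_inv := fun j => by simp }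
    have h2 := h1.comp eqv eqv.injective
    have h3 : w = (fun i : { y : Fin (m + 1) // y ≠ 0 } => (v i : EuclideanSpace ℝ (Fin m)) -ᵥ v 0) ∘ eqv := by
      funext i
      simp [hw, eqv, vsub_eq_sub]
    rw [h3]
    exact h2
  have hcard : Fintype.card (Fin m) = Module.finrank ℝ (EuclideanSpace ℝ (Fin m)) := by
    simp [finrank_euclideanSpace_fin]
  haveI : Nonempty (Fin m) := ⟨⟨0, by omega⟩⟩
  set b := basisOfLinearIndependentOfCardEqFinrank hli hcard with hbdef
  have hb : ⇑b = w := coe_basisOfLinearIndependentOfCardEqFinrank hli hcard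
  -- dual vectors
  have key : ∀ i : Fin m, ∃ u : EuclideanSpace ℝ (Fin m),
      ⟪w i, u⟫ = 1 ∧ (∀ j : Fin m, j ≠ i → ⟪w j, u⟫ = 0) ∧ ‖u‖ ≤ a⁻¹ := by
    intro i
    set S : AffineSubspace ℝ (EuclideanSpace ℝ (Fin m)) :=
      affineSpan ℝ (v '' {i.succ}ᶜ) with hS
    have hv0 : v 0 ∈ S := subset_affineSpan ℝ _ ⟨0, (Fin.succ_ne_zero i).symm, rfl⟩
    set K := S.direction with hKdef
    set q : EuclideanSpace ℝ (Fin m) := (K.orthogonalProjectionOnto (w i) : EuclideanSpace ℝ (Fin m))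
      with hq
    set r : EuclideanSpace ℝ (Fin m) := w i - q with hr
    have hrmem : r ∈ Kᗮ := Submodule.sub_starProjection_mem_orthogonal (K := K) (w i)
    have hqmem : q ∈ K := (K.orthogonalProjectionOnto (w i)).2
    have hra : a ≤ ‖r‖ := by
      have hpt : q +ᵥ v 0 ∈ S := AffineSubspace.vadd_mem_of_mem_direction hqmem hv0
      have h1 : Metric.infDist (v i.succ) (S : Set (EuclideanSpace ℝ (Fin m))) ≤ ‖r‖ := by
        have h2 := Metric.infDist_le_dist_of_mem (x := v i.succ) hpt
        have h3 : dist (v i.succ) (q +ᵥ v 0) = ‖r‖ := by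
          rw [dist_eq_norm]
          congr 1
          simp only [hr, hw, vadd_eq_add]
          abel
        rwa [h3] at h2
      have h2 : a ≤ Metric.infDist (v i.succ) (S : Set (EuclideanSpace ℝ (Fin m))) :=
        ha.2 ⟨i.succ, rfl⟩
      linarith
    have hr0 : (0 : ℝ) < ‖r‖ := lt_of_lt_of_le ha0 hra
    refine ⟨(‖r‖ ^ 2)⁻¹ • r, ?_, ?_, ?_⟩
    · rw [real_inner_smul_right]
      have hwr : ⟪w i, r⟫ = ‖r‖ ^ 2 := by
        have hsplit : w i = q + r := by simp [hr]
        have hqr : ⟪q, r⟫ = 0 := hrmem q hqmem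
        rw [hsplit, inner_add_left, hqr, real_inner_self_eq_norm_sq]
        ring
      rw [hwr]
      field_simp
    · intro j hj
      have hwjK : w j ∈ K := by
        have hmj : v j.succ ∈ S := by
          refine subset_affineSpan ℝ _ ⟨j.succ, ?_, rfl⟩
          simp only [Set.mem_compl_iff, Set.mem_singleton_iff]
          exact fun h => hj (Fin.succ_injective m h)
        have := AffineSubspace.vsub_mem_direction hmj hv0
        simpa [vsub_eq_sub] using this
      rw [real_inner_smul_right, hrmem (w j) hwjK, mul_zero]
    · rw [norm_smul]
      have : ‖(‖r‖ ^ 2)⁻¹‖ = (‖r‖ ^ 2)⁻¹ := by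
        rw [Real.norm_eq_abs, abs_of_nonneg]; positivity
      rw [this]
      have h4 : (‖r‖ ^ 2)⁻¹ * ‖r‖ = ‖r‖⁻¹ := by
        field_simp
      rw [h4]
      exact inv_anti₀ ha0 hra
  choose u hu1 hu2 hu3 using key
  -- coefficient bounds
  have expand : ∀ p : EuclideanSpace ℝ (Fin m),
      ‖F x - p‖ ^ 2 - ‖x - p‖ ^ 2 =
        ‖F x‖ ^ 2 - ‖x‖ ^ 2 - 2 * (⟪F x, p⟫ - ⟪x, p⟫) := by
    intro p
    rw [norm_sub_sq_real, norm_sub_sq_real]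
    ring
  have hD : ∀ j, |‖F x - v j‖ ^ 2 - ‖x - v j‖ ^ 2| ≤ 3 * ξ * L ^ 2 := by
    intro j
    have h1 := hdistort x hx (v j) (hmem j)
    rw [hfix j] at h1
    have h2 := abs_le.mp h1
    have hD0 : (0 : ℝ) ≤ ‖F x - v j‖ := norm_nonneg _
    have hN0 : (0 : ℝ) ≤ ‖x - v j‖ := norm_nonneg _
    have hNL := hxL j x hx
    have hsum : ‖F x - v j‖ + ‖x - v j‖ ≤ 3 * L := by nlinarith [h2.1, h2.2]
    have hfac : ‖F x - v j‖ ^ 2 - ‖x - v j‖ ^ 2 =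
        (‖F x - v j‖ - ‖x - v j‖) * (‖F x - v j‖ + ‖x - v j‖) := by ring
    have habs : |‖F x - v j‖ ^ 2 - ‖x - v j‖ ^ 2| ≤ ξ * ‖x - v j‖ * (3 * L) := by
      rw [hfac, abs_mul]
      refine mul_le_mul h1 ?_ (abs_nonneg _) (mul_nonneg hξ0 hN0)
      rw [abs_of_nonneg (by positivity)]
      exact hsum
    refine le_trans habs ?_
    have h6 : ξ * ‖x - v j‖ ≤ ξ * L := mul_le_mul_of_nonneg_left hNL hξ0
    have h7 : ξ * ‖x - v j‖ * (3 * L) ≤ ξ * L * (3 * L) :=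
      mul_le_mul_of_nonneg_right h6 (by linarith)
    nlinarith [h7]
  have hcoef : ∀ i : Fin m, |⟪e, w i⟫| ≤ 3 * ξ * L ^ 2 := by
    intro i
    have hid : 2 * ⟪e, w i⟫ =
        (‖F x - v i.succ‖ ^ 2 - ‖x - v i.succ‖ ^ 2) -
          (‖F x - v 0‖ ^ 2 - ‖x - v 0‖ ^ 2) := by
      rw [expand, expand]
      have h3 : ⟪e, w i⟫ =
          ⟪x, v i.succ⟫ - ⟪F x, v i.succ⟫ - ⟪x, v 0⟫ + ⟪F x, v 0⟫ := by
        simp only [he, hw, inner_sub_left, inner_sub_right]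
        ring
      rw [h3]
      ring
    have h4 := abs_le.mp (hD i.succ)
    have h5 := abs_le.mp (hD 0)
    rw [abs_le]
    constructor <;> linarith [h4.1, h4.2, h5.1, h5.2]
  -- decomposition of e
  have hdecomp : e = ∑ i, ⟪e, w i⟫ • u i := by
    set d : EuclideanSpace ℝ (Fin m) := e - ∑ i, ⟪e, w i⟫ • u i with hd
    have hdw : ∀ j, ⟪w j, d⟫ = 0 := by
      intro j
      rw [hd, inner_sub_right, inner_sum]
      have hsum : ∑ i, ⟪w j, ⟪e, w i⟫ • u i⟫ = ⟪e, w j⟫ := by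
        rw [Finset.sum_eq_single j]
        · rw [real_inner_smul_right, hu1 j, mul_one]
        · intro i _ hij
          rw [real_inner_smul_right, hu2 i j (Ne.symm hij), mul_zero]
        · intro h
          exact absurd (Finset.mem_univ j) h
      rw [hsum, real_inner_comm, sub_self]
    have hdd : ⟪d, d⟫ = 0 := by
      nth_rewrite 1 [← b.sum_repr d]
      rw [sum_inner]
      refine Finset.sum_eq_zero fun i _ => ?_
      rw [real_inner_smul_left]
      have hbi : (b i : EuclideanSpace ℝ (Fin m)) = w i := congrFun hb i
      rw [hbi, hdw i, mul_zero]
    have hd0 : d = 0 := inner_self_eq_zero.mp hdd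
    exact sub_eq_zero.mp hd0
  -- final estimate
  have hnorm : ‖e‖ ≤ (m : ℝ) * (3 * ξ * L ^ 2 * a⁻¹) := by
    rw [hdecomp]
    refine le_trans (norm_sum_le _ _) ?_
    have hterm : ∀ i : Fin m, ‖⟪e, w i⟫ • u i‖ ≤ 3 * ξ * L ^ 2 * a⁻¹ := by
      intro i
      rw [norm_smul, Real.norm_eq_abs]
      exact mul_le_mul (hcoef i) (hu3 i) (norm_nonneg _) (by positivity)
    refine le_trans (Finset.sum_le_sum fun i _ => hterm i) ?_
    rw [Finset.sum_const, Finset.card_univ, Fintype.card_fin, nsmul_eq_mul]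
  have hm0 : (0 : ℝ) < (m : ℝ) := by exact_mod_cast hm
  have hteq : 3 * ξ * L / t = (m : ℝ) * (3 * ξ * L ^ 2 * a⁻¹) := by
    rw [ht]
    field_simp
  rw [hteq]
  exact hnorm
end

section
/- A point covered once: Let C be a simplicial complex in EuclideanSpace ℝ (Fin m) (in the sense of Mathlib's Geometry.SimplicialComplex) with finitely many faces, which is pure m-dimensional, i.e. every face is contained in a face with m+1 elements, and suppose every face of C with at least two vertices has thickness at least t₀ > 0. Let F : EuclideanSpace ℝ (Fin m) → EuclideanSpace ℝ (Fin m) fix every vertex of C, and suppose the restriction of F to the convex hull of each (m+1)-element face is a ξ-distortion map with ξ ≤ (1/6)·(m/(m+1))·t₀². Let σ be an (m+1)-element face whose longest edge length is maximal among all faces of C, and let b be the barycentre of σ. Then for every x in the underlying space (carrier) of C, F x = F b implies x = b. -/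
set_option maxHeartbeats 1600000


open Metric

/-- The length of the longest edge of the simplex with vertex set `s`. -/
noncomputable def longestEdge {E : Type*} [NormedAddCommGroup E] (s : Finset E) : ℝ :=
  sSup {d : ℝ | ∃ p ∈ s, ∃ q ∈ s, p ≠ q ∧ d = dist p q}

/-- The minimum altitude of the simplex with vertex set `s`: the least distance from a
vertex to the affine span of the remaining vertices. -/
noncomputable def minAltitude {E : Type*} [NormedAddCommGroup E] [NormedSpace ℝ E]
    (s : Finset E) : ℝ :=
  sInf {d : ℝ | ∃ p ∈ s, d = Metric.infDist p (affineSpan ℝ ((s : Set E) \ {p}) : Set E)}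

/-- The thickness `t(σ) = a(σ) / (j · L(σ))` of a `j`-simplex with vertex set `s`
(so `j = s.card - 1`). -/
noncomputable def thickness {E : Type*} [NormedAddCommGroup E] [NormedSpace ℝ E]
    (s : Finset E) : ℝ :=
  minAltitude s / (((s.card : ℝ) - 1) * longestEdge s)

open scoped RealInnerProductSpace

section AuxLemmas

variable {E : Type*} [NormedAddCommGroup E]

private lemma edge_set_finite (s : Finset E) :
    {d : ℝ | ∃ p ∈ s, ∃ q ∈ s, p ≠ q ∧ d = dist p q}.Finite := by
  apply ((s ×ˢ s).finite_toSet.image fun pq => dist pq.1 pq.2).subset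
  rintro d ⟨p, hp, q, hq, -, rfl⟩
  exact ⟨(p, q), by simp [hp, hq], rfl⟩

lemma dist_le_longestEdge {s : Finset E} {p q : E}
    (hp : p ∈ s) (hq : q ∈ s) (hne : p ≠ q) : dist p q ≤ longestEdge s :=
  le_csSup (edge_set_finite s).bddAbove ⟨p, hp, q, hq, hne, rfl⟩

lemma longestEdge_pos {s : Finset E} (h : 1 < s.card) : 0 < longestEdge s := by
  obtain ⟨a, ha, c, hc, hne⟩ := Finset.one_lt_card.mp h
  exact lt_of_lt_of_le (dist_pos.mpr hne) (dist_le_longestEdge ha hc hne)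

lemma convexHull_subset_closedBall [NormedSpace ℝ E] {s : Finset E} {p : E}
    (hp : p ∈ s) (h : 1 < s.card) :
    convexHull ℝ (s : Set E) ⊆ closedBall p (longestEdge s) := by
  apply convexHull_min ?_ (convex_closedBall _ _)
  intro q hq
  rw [Finset.mem_coe] at hq
  rcases eq_or_ne q p with rfl | hne
  · simpa using (longestEdge_pos h).le
  · exact mem_closedBall.mpr (dist_le_longestEdge hq hp hne)

private lemma alt_set_finite [NormedSpace ℝ E] (s : Finset E) :
    {d : ℝ | ∃ p ∈ s, d = Metric.infDist p
      (affineSpan ℝ ((s : Set E) \ {p}) : Set E)}.Finite := by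
  apply (s.finite_toSet.image fun p =>
    Metric.infDist p (affineSpan ℝ ((s : Set E) \ {p}) : Set E)).subset
  rintro d ⟨p, hp, rfl⟩
  exact ⟨p, hp, rfl⟩

lemma minAltitude_le [NormedSpace ℝ E] {s : Finset E} {p : E} (hp : p ∈ s) :
    minAltitude s ≤ Metric.infDist p (affineSpan ℝ ((s : Set E) \ {p}) : Set E) :=
  csInf_le (alt_set_finite s).bddBelow ⟨p, hp, rfl⟩

end AuxLemmas

section Euclidean

variable {m : ℕ}

/-- If a vector is orthogonal to all differences of vertices of a full-dimensional
affinely independent set, it is zero. -/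
private lemma inner_all_diff_zero (τ : Finset (EuclideanSpace ℝ (Fin m)))
    (hind : AffineIndependent ℝ ((↑) : τ → EuclideanSpace ℝ (Fin m)))
    (hcard : τ.card = m + 1) (v : EuclideanSpace ℝ (Fin m))
    (h : ∀ p ∈ τ, ∀ q ∈ τ, ⟪v, p - q⟫ = 0) : v = 0 := by
  have htop : affineSpan ℝ (Set.range ((↑) : τ → EuclideanSpace ℝ (Fin m))) = ⊤ := by
    rw [hind.affineSpan_eq_top_iff_card_eq_finrank_add_one]
    simp [hcard, finrank_euclideanSpace_fin, Fintype.card_coe]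
  have htop' : affineSpan ℝ ((τ : Set (EuclideanSpace ℝ (Fin m)))) = ⊤ := by
    simp only [Subtype.range_coe_subtype, Finset.setOf_mem] at htop
    exact htop
  have hvs : vectorSpan ℝ ((τ : Set (EuclideanSpace ℝ (Fin m)))) = ⊤ := by
    rw [← direction_affineSpan, htop', AffineSubspace.direction_top]
  have hv : v ∈ (vectorSpan ℝ ((τ : Set (EuclideanSpace ℝ (Fin m)))))ᗮ := by
    rw [Submodule.mem_orthogonal']
    intro u hu
    rw [vectorSpan_def] at hu
    induction hu using Submodule.span_induction with
    | mem u hu =>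
      obtain ⟨p, hp, q, hq, rfl⟩ := Set.mem_vsub.mp hu
      rw [vsub_eq_sub]
      exact h p hp q hq
    | zero => exact inner_zero_right v
    | add u w _ _ hu hw => rw [inner_add_right, hu, hw, add_zero]
    | smul c u _ hu => rw [real_inner_smul_right, hu, mul_zero]
  rw [hvs, Submodule.top_orthogonal_eq_bot, Submodule.mem_bot] at hv
  exact hv

/-- Construction of the "dual basis" vectors of a full-dimensional simplex. -/
private lemma exists_dual (hm : 1 ≤ m) (τ : Finset (EuclideanSpace ℝ (Fin m)))
    (hind : AffineIndependent ℝ ((↑) : τ → EuclideanSpace ℝ (Fin m)))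
    (hcard : τ.card = m + 1) :
    ∃ n : EuclideanSpace ℝ (Fin m) → EuclideanSpace ℝ (Fin m),
      (∀ p ∈ τ, ‖n p‖ * minAltitude τ ≤ 1) ∧
      (∑ p ∈ τ, n p = 0) ∧
      (∀ p₀ ∈ τ, ∀ v, v = ∑ p ∈ τ, ⟪v, p - p₀⟫ • n p) ∧
      (∀ v, ∑ p ∈ τ, ⟪n p, v⟫ • p = v) := by
  classical
  have hcard2 : 1 < τ.card := by omega
  -- pointwise construction
  have key : ∀ p ∈ τ, ∃ np : EuclideanSpace ℝ (Fin m),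
      ‖np‖ * Metric.infDist p (affineSpan ℝ ((τ : Set (EuclideanSpace ℝ (Fin m))) \ {p}) :
        Set (EuclideanSpace ℝ (Fin m))) ≤ 1 ∧
      ∀ q ∈ τ, q ≠ p → ⟪np, p - q⟫ = 1 := by
    intro p hp
    obtain ⟨q₀, hq₀τ, hq₀ne⟩ := Finset.exists_mem_ne hcard2 p
    set S : Set (EuclideanSpace ℝ (Fin m)) := (τ : Set (EuclideanSpace ℝ (Fin m))) \ {p} with hS
    have hq₀S : q₀ ∈ S := ⟨hq₀τ, hq₀ne⟩
    set V : Submodule ℝ (EuclideanSpace ℝ (Fin m)) := vectorSpan ℝ S with hV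
    set d : EuclideanSpace ℝ (Fin m) := p - q₀ with hd
    set w : EuclideanSpace ℝ (Fin m) := d - (V.orthogonalProjectionOnto d : EuclideanSpace ℝ (Fin m))
      with hwdef
    have hworth : w ∈ Vᗮ := by
      have := V.sub_starProjection_mem_orthogonal d
      rwa [Submodule.starProjection_apply] at this
    have hpnot : p ∉ affineSpan ℝ S := by
      have h1 := hind.notMem_affineSpan_sdiff ⟨p, hp⟩ Set.univ
      have himg : ((↑) : τ → EuclideanSpace ℝ (Fin m)) '' (Set.univ \ {⟨p, hp⟩}) = S := by
        ext y
        constructor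
        · rintro ⟨⟨a, ha⟩, ⟨-, hne⟩, rfl⟩
          refine ⟨ha, fun h => hne ?_⟩
          simp only [Set.mem_singleton_iff] at h ⊢
          exact Subtype.ext h
        · rintro ⟨hy, hne⟩
          refine ⟨⟨y, hy⟩, ⟨trivial, fun h => hne ?_⟩, rfl⟩
          simp only [Set.mem_singleton_iff] at h ⊢
          exact congrArg Subtype.val h
      rwa [himg] at h1
    have hw0 : w ≠ 0 := by
      intro h0
      apply hpnot
      have hdV : d ∈ V := by
        have heq : d = (V.orthogonalProjectionOnto d : EuclideanSpace ℝ (Fin m)) :=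
          sub_eq_zero.mp h0
        have h2 : (V.orthogonalProjectionOnto d : EuclideanSpace ℝ (Fin m)) ∈ V :=
          (V.orthogonalProjectionOnto d).2
        rwa [← heq] at h2
      have hq₀span : q₀ ∈ affineSpan ℝ S := subset_affineSpan ℝ S hq₀S
      have := AffineSubspace.vadd_mem_of_mem_direction
        (by rwa [direction_affineSpan]) hq₀span
      simpa [hd, vadd_eq_add, sub_add_cancel] using this
    have hwpos : (0:ℝ) < ‖w‖ := norm_pos_iff.mpr hw0
    refine ⟨(‖w‖ ^ 2)⁻¹ • w, ?_, ?_⟩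
    · -- norm bound
      have hz : (V.orthogonalProjectionOnto d : EuclideanSpace ℝ (Fin m)) + q₀ ∈ affineSpan ℝ S := by
        apply AffineSubspace.vadd_mem_of_mem_direction
        · rw [direction_affineSpan]; exact (V.orthogonalProjectionOnto d).2
        · exact subset_affineSpan ℝ S hq₀S
      have hdist : Metric.infDist p (affineSpan ℝ S : Set (EuclideanSpace ℝ (Fin m))) ≤ ‖w‖ := by
        have h1 := Metric.infDist_le_dist_of_mem (x := p) hz
        have : dist p ((V.orthogonalProjectionOnto d : EuclideanSpace ℝ (Fin m)) + q₀) = ‖w‖ := by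
          rw [dist_eq_norm, hwdef, hd]
          congr 1
          abel
        linarith [h1, this.le, this.ge]
      have hn : ‖(‖w‖ ^ 2)⁻¹ • w‖ = ‖w‖⁻¹ := by
        rw [norm_smul, Real.norm_eq_abs, abs_of_nonneg (by positivity)]
        field_simp
      rw [hn]
      calc ‖w‖⁻¹ * Metric.infDist p (affineSpan ℝ S : Set (EuclideanSpace ℝ (Fin m)))
          ≤ ‖w‖⁻¹ * ‖w‖ := by
            apply mul_le_mul_of_nonneg_left hdist (by positivity)
        _ = 1 := inv_mul_cancel₀ hwpos.ne'
    · -- inner products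
      intro q hq hqp
      have hqS : q ∈ S := ⟨hq, hqp⟩
      have hsplit : p - q = w + ((V.orthogonalProjectionOnto d : EuclideanSpace ℝ (Fin m))
          + (q₀ - q)) := by
        rw [hwdef, hd]; abel
      have hmem : (V.orthogonalProjectionOnto d : EuclideanSpace ℝ (Fin m)) + (q₀ - q) ∈ V := by
        apply Submodule.add_mem
        · exact (V.orthogonalProjectionOnto d).2
        · exact vsub_mem_vectorSpan ℝ hq₀S hqS
      rw [hsplit, inner_add_right, real_inner_smul_left, real_inner_smul_left]
      have horth : ⟪w, (V.orthogonalProjectionOnto d : EuclideanSpace ℝ (Fin m)) + (q₀ - q)⟫ = 0 := by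
        have := (Submodule.mem_orthogonal' V w).mp hworth
        exact this _ hmem
      rw [horth, real_inner_self_eq_norm_sq, mul_zero, add_zero,
        inv_mul_cancel₀ (by positivity)]
  choose! n hA hB using key
  -- the "delta" property for differences
  have hBij : ∀ p ∈ τ, ∀ q ∈ τ, ∀ q' ∈ τ, ⟪n p, q - q'⟫ =
      (if q = p then (1:ℝ) else 0) - (if q' = p then 1 else 0) := by
    intro p hp q hq q' hq'
    have e : ∀ r ∈ τ, ⟪n p, p - r⟫ = if r = p then 0 else 1 := by
      intro r hr
      by_cases h : r = p
      · simp [h]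
      · rw [if_neg h]; exact hB p hp r hr h
    have hqq' : q - q' = (p - q') - (p - q) := by abel
    rw [hqq', inner_sub_right, e q' hq', e q hq]
    by_cases h1 : q = p <;> by_cases h2 : q' = p <;> simp [h1, h2]
  have hτne : τ.Nonempty := Finset.card_pos.mp (by omega)
  -- sum of the duals is zero
  have hsum0 : ∑ p ∈ τ, n p = 0 := by
    apply inner_all_diff_zero τ hind hcard
    intro q hq q' hq'
    rw [sum_inner]
    have : ∀ p ∈ τ, ⟪n p, q - q'⟫ =
        (if q = p then (1:ℝ) else 0) - (if q' = p then 1 else 0) := fun p hp => hBij p hp q hq q' hq'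
    rw [Finset.sum_congr rfl this, Finset.sum_sub_distrib,
      Finset.sum_ite_eq τ q (fun _ => (1:ℝ)), Finset.sum_ite_eq τ q' (fun _ => (1:ℝ)),
      if_pos hq, if_pos hq', sub_self]
  -- decomposition of an arbitrary vector
  have hdecomp : ∀ p₀ ∈ τ, ∀ v, v = ∑ p ∈ τ, ⟪v, p - p₀⟫ • n p := by
    intro p₀ hp₀ v
    have h0 : v - ∑ p ∈ τ, ⟪v, p - p₀⟫ • n p = 0 := by
      apply inner_all_diff_zero τ hind hcard
      intro q hq q' hq'
      rw [inner_sub_left, sum_inner]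
      have hterm : ∀ p ∈ τ, ⟪⟪v, p - p₀⟫ • n p, q - q'⟫ =
          (if q = p then ⟪v, p - p₀⟫ else 0) - (if q' = p then ⟪v, p - p₀⟫ else 0) := by
        intro p hp
        rw [real_inner_smul_left, hBij p hp q hq q' hq']
        split_ifs <;> ring
      rw [Finset.sum_congr rfl hterm, Finset.sum_sub_distrib,
        Finset.sum_ite_eq τ q (fun p => ⟪v, p - p₀⟫),
        Finset.sum_ite_eq τ q' (fun p => ⟪v, p - p₀⟫), if_pos hq, if_pos hq']
      simp only [inner_sub_right]
      ring
    exact sub_eq_zero.mp h0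
  -- reconstruction
  have hrecon : ∀ v, ∑ p ∈ τ, ⟪n p, v⟫ • p = v := by
    intro v
    obtain ⟨p₀, hp₀⟩ := hτne
    have hc0 : ∑ p ∈ τ, ⟪n p, v⟫ = 0 := by
      rw [← sum_inner, hsum0, inner_zero_left]
    have hw_eq : ∑ p ∈ τ, ⟪n p, v⟫ • p = ∑ p ∈ τ, ⟪n p, v⟫ • (p - p₀) := by
      simp only [smul_sub, Finset.sum_sub_distrib, ← Finset.sum_smul, hc0, zero_smul, sub_zero]
    set w : EuclideanSpace ℝ (Fin m) := ∑ p ∈ τ, ⟪n p, v⟫ • (p - p₀) with hwdef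
    have hq : ∀ q ∈ τ, ⟪n q, w - v⟫ = 0 := by
      intro q hq
      have h1 : ⟪n q, w⟫ = ⟪n q, v⟫ := by
        rw [hwdef, inner_sum]
        have hterm : ∀ p ∈ τ, ⟪n q, ⟪n p, v⟫ • (p - p₀)⟫ =
            (if p = q then ⟪n p, v⟫ else 0) - (if p₀ = q then ⟪n p, v⟫ else 0) := by
          intro p hp
          rw [real_inner_smul_right, hBij q hq p hp p₀ hp₀]
          split_ifs <;> ring
        rw [Finset.sum_congr rfl hterm, Finset.sum_sub_distrib,
          Finset.sum_ite_eq' τ q (fun p => ⟪n p, v⟫), if_pos hq]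
        have h2 : ∑ p ∈ τ, (if p₀ = q then ⟪n p, v⟫ else 0) = 0 := by
          split_ifs
          · exact hc0
          · simp
        rw [h2, sub_zero]
      rw [inner_sub_right, h1, sub_self]
    have hzero : ⟪w - v, w - v⟫ = 0 := by
      nth_rewrite 2 [hdecomp p₀ hp₀ (w - v)]
      rw [inner_sum]
      apply Finset.sum_eq_zero
      intro p hp
      have h3 : ⟪w - v, n p⟫ = (0:ℝ) := by rw [real_inner_comm]; exact hq p hp
      rw [real_inner_smul_right, h3, mul_zero]
    have : w - v = 0 := inner_self_eq_zero.mp hzero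
    rw [hw_eq, sub_eq_zero.mp this]
  -- norm bound against the minimal altitude
  refine ⟨n, ?_, hsum0, hdecomp, hrecon⟩
  intro p hp
  have h1 := hA p hp
  have h2 := minAltitude_le hp
  nlinarith [norm_nonneg (n p)]

/-- A `ξ`-distortion map fixing the vertices of a thick full-dimensional simplex moves
every point of the simplex by at most `ξ(2+ξ)L/t₀`. -/
private lemma displacement (hm : 1 ≤ m) (τ : Finset (EuclideanSpace ℝ (Fin m)))
    (hind : AffineIndependent ℝ ((↑) : τ → EuclideanSpace ℝ (Fin m)))
    (hcard : τ.card = m + 1) (t₀ ξ : ℝ) (ht₀ : 0 < t₀) (hξ0 : 0 ≤ ξ)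
    (hth : t₀ ≤ thickness τ)
    (F : EuclideanSpace ℝ (Fin m) → EuclideanSpace ℝ (Fin m))
    (hfix : ∀ p ∈ τ, F p = p)
    (hdis : ∀ x ∈ convexHull ℝ (τ : Set (EuclideanSpace ℝ (Fin m))),
      ∀ y ∈ convexHull ℝ (τ : Set (EuclideanSpace ℝ (Fin m))),
        |‖F x - F y‖ - ‖x - y‖| ≤ ξ * ‖x - y‖)
    (x : EuclideanSpace ℝ (Fin m)) (hx : x ∈ convexHull ℝ (τ : Set (EuclideanSpace ℝ (Fin m)))) :
    ‖F x - x‖ ≤ ξ * (2 + ξ) * longestEdge τ / t₀ := by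
  classical
  have hcard2 : 1 < τ.card := by omega
  set L : ℝ := longestEdge τ with hLdef
  have hLpos : 0 < L := longestEdge_pos hcard2
  have hmR : (1:ℝ) ≤ (m:ℝ) := by exact_mod_cast hm
  have hmLpos : (0:ℝ) < (m:ℝ) * L := by positivity
  have haτ : t₀ * ((m:ℝ) * L) ≤ minAltitude τ := by
    have hth' : thickness τ = minAltitude τ / ((m:ℝ) * L) := by
      rw [thickness, hcard]
      push_cast
      ring_nf
      rw [hLdef]
    rw [hth'] at hth
    exact (le_div_iff₀ hmLpos).mp hth
  have hapos : 0 < minAltitude τ := lt_of_lt_of_le (by positivity) haτ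
  obtain ⟨n, hnorm, hsum0, hdecomp, hrecon⟩ := exists_dual hm τ hind hcard
  obtain ⟨p₀, hp₀⟩ : τ.Nonempty := Finset.card_pos.mp (by omega)
  set u : EuclideanSpace ℝ (Fin m) := F x - x with hu
  -- bound on the "distance polynomial" at each vertex
  have hD : ∀ p ∈ τ, |‖u‖ ^ 2 + 2 * ⟪u, x - p⟫| ≤ ξ * (2 + ξ) * L ^ 2 := by
    intro p hp
    have hxp : ‖x - p‖ ≤ L := by
      have := convexHull_subset_closedBall hp hcard2 hx
      rwa [mem_closedBall, dist_eq_norm] at this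
    have h1 := hdis x hx p (subset_convexHull ℝ _ hp)
    rw [hfix p hp] at h1
    obtain ⟨hlow, hhigh⟩ := abs_le.mp h1
    have hβ0 : (0:ℝ) ≤ ‖x - p‖ := norm_nonneg _
    have hα0 : (0:ℝ) ≤ ‖F x - p‖ := norm_nonneg _
    have hupper : ‖F x - p‖ ≤ (1 + ξ) * ‖x - p‖ := by linarith
    have hsq : |‖F x - p‖ ^ 2 - ‖x - p‖ ^ 2| ≤ ξ * (2 + ξ) * L ^ 2 := by
      have hd1 : (‖F x - p‖ - ‖x - p‖) * (‖F x - p‖ + ‖x - p‖) ≤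
          ξ * ‖x - p‖ * (‖F x - p‖ + ‖x - p‖) :=
        mul_le_mul_of_nonneg_right hhigh (by positivity)
      have hd2 : (‖x - p‖ - ‖F x - p‖) * (‖F x - p‖ + ‖x - p‖) ≤
          ξ * ‖x - p‖ * (‖F x - p‖ + ‖x - p‖) :=
        mul_le_mul_of_nonneg_right (by linarith) (by positivity)
      have hd3 : ξ * ‖x - p‖ * (‖F x - p‖ + ‖x - p‖) ≤
          ξ * ‖x - p‖ * ((2 + ξ) * ‖x - p‖) :=
        mul_le_mul_of_nonneg_left (by linarith) (mul_nonneg hξ0 hβ0)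
      have hd4 : ξ * (2 + ξ) * (‖x - p‖ * ‖x - p‖) ≤ ξ * (2 + ξ) * (L * L) :=
        mul_le_mul_of_nonneg_left (mul_le_mul hxp hxp hβ0 hLpos.le)
          (mul_nonneg hξ0 (by linarith))
      rw [abs_le]
      constructor <;> nlinarith [hd1, hd2, hd3, hd4]
    have hexp : ‖F x - p‖ ^ 2 = ‖u‖ ^ 2 + 2 * ⟪u, x - p⟫ + ‖x - p‖ ^ 2 := by
      rw [show F x - p = u + (x - p) from by rw [hu]; abel]
      exact norm_add_sq_real _ _
    have : ‖u‖ ^ 2 + 2 * ⟪u, x - p⟫ = ‖F x - p‖ ^ 2 - ‖x - p‖ ^ 2 := by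
      rw [hexp]; ring
    rwa [this]
  -- bound on the coefficients
  have hc : ∀ p ∈ τ, |⟪u, p - p₀⟫| ≤ ξ * (2 + ξ) * L ^ 2 := by
    intro p hp
    have h₁ := abs_le.mp (hD p₀ hp₀)
    have h₂ := abs_le.mp (hD p hp)
    have e : p - p₀ = (x - p₀) - (x - p) := by abel
    rw [e, inner_sub_right, abs_le]
    constructor <;> linarith
  -- norm bound for the dual vectors
  have hnp : ∀ p ∈ τ, ‖n p‖ ≤ (t₀ * ((m:ℝ) * L))⁻¹ := by
    intro p hp
    have h1 : ‖n p‖ * (t₀ * ((m:ℝ) * L)) ≤ 1 :=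
      le_trans (mul_le_mul_of_nonneg_left haτ (norm_nonneg _)) (hnorm p hp)
    rw [inv_eq_one_div, le_div_iff₀ (by positivity)]
    linarith
  -- put everything together
  have hB0 : (0:ℝ) ≤ ξ * (2 + ξ) * L ^ 2 :=
    mul_nonneg (mul_nonneg hξ0 (by linarith)) (sq_nonneg L)
  calc ‖F x - x‖ = ‖∑ p ∈ τ, ⟪u, p - p₀⟫ • n p‖ := congrArg norm (hdecomp p₀ hp₀ u)
    _ ≤ ∑ p ∈ τ, ‖⟪u, p - p₀⟫ • n p‖ := norm_sum_le _ _
    _ = ∑ p ∈ τ, |⟪u, p - p₀⟫| * ‖n p‖ := by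
        refine Finset.sum_congr rfl fun p _ => ?_
        rw [norm_smul, Real.norm_eq_abs]
    _ = ∑ p ∈ τ.erase p₀, |⟪u, p - p₀⟫| * ‖n p‖ := by
        rw [← Finset.sum_erase_add τ _ hp₀]
        simp
    _ ≤ ∑ p ∈ τ.erase p₀, (ξ * (2 + ξ) * L ^ 2) * (t₀ * ((m:ℝ) * L))⁻¹ := by
        refine Finset.sum_le_sum fun p hp => ?_
        have hp' : p ∈ τ := Finset.mem_of_mem_erase hp
        exact mul_le_mul (hc p hp') (hnp p hp') (norm_nonneg _) hB0
    _ = (m:ℝ) * ((ξ * (2 + ξ) * L ^ 2) * (t₀ * ((m:ℝ) * L))⁻¹) := by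
        rw [Finset.sum_const, Finset.card_erase_of_mem hp₀, hcard, nsmul_eq_mul]
        push_cast
        ring
    _ = ξ * (2 + ξ) * L / t₀ := by
        field_simp

/-- The closed ball of radius `a(σ)/(m+1)` around the barycentre of a full-dimensional
simplex is inside the simplex. -/
private lemma closedBall_subset_convexHull (hm : 1 ≤ m) (σ : Finset (EuclideanSpace ℝ (Fin m)))
    (hind : AffineIndependent ℝ ((↑) : σ → EuclideanSpace ℝ (Fin m)))
    (hσcard : σ.card = m + 1) (hapos : 0 < minAltitude σ)
    (b : EuclideanSpace ℝ (Fin m)) (hb : b = ((m : ℝ) + 1)⁻¹ • ∑ p ∈ σ, p) :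
    closedBall b (minAltitude σ / ((m:ℝ) + 1)) ⊆
      convexHull ℝ (σ : Set (EuclideanSpace ℝ (Fin m))) := by
  classical
  intro z hz
  set a : ℝ := minAltitude σ with hadef
  have hm1pos : (0:ℝ) < (m:ℝ) + 1 := by positivity
  have hz' : ‖z - b‖ ≤ a / ((m:ℝ) + 1) := by
    rw [← dist_eq_norm]
    exact mem_closedBall.mp hz
  obtain ⟨n, hnorm, hsum0, hdecomp, hrecon⟩ := exists_dual hm σ hind hσcard
  set w : EuclideanSpace ℝ (Fin m) → ℝ := fun p => ((m:ℝ) + 1)⁻¹ + ⟪n p, z - b⟫ with hwdef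
  have hw0 : ∀ p ∈ σ, 0 ≤ w p := by
    intro p hp
    have h1 : |⟪n p, z - b⟫| ≤ ‖n p‖ * ‖z - b‖ := abs_real_inner_le_norm _ _
    have h3 := hnorm p hp
    have h4 : ‖n p‖ * ‖z - b‖ ≤ ((m:ℝ) + 1)⁻¹ := by
      have h5 : ‖n p‖ * ‖z - b‖ ≤ ‖n p‖ * (a / ((m:ℝ) + 1)) :=
        mul_le_mul_of_nonneg_left hz' (norm_nonneg _)
      have h6 : ‖n p‖ * (a / ((m:ℝ) + 1)) ≤ 1 / ((m:ℝ) + 1) := by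
        rw [show ‖n p‖ * (a / ((m:ℝ) + 1)) = (‖n p‖ * a) / ((m:ℝ) + 1) from by ring]
        exact (div_le_div_iff_of_pos_right hm1pos).mpr h3
      rw [inv_eq_one_div]
      exact h5.trans h6
    have h7 := (abs_le.mp (h1.trans h4)).1
    simp only [hwdef]
    linarith
  have hwsum : ∑ p ∈ σ, w p = 1 := by
    simp only [hwdef]
    rw [Finset.sum_add_distrib, Finset.sum_const, hσcard, ← sum_inner, hsum0,
      inner_zero_left, add_zero, nsmul_eq_mul]
    push_cast
    field_simp
  have hcomb : ∑ p ∈ σ, w p • p = z := by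
    simp only [hwdef, add_smul]
    rw [Finset.sum_add_distrib, hrecon (z - b), ← Finset.smul_sum, ← hb]
    abel
  rw [Finset.convexHull_eq]
  refine ⟨w, hw0, hwsum, ?_⟩
  rw [Finset.centerMass_eq_of_sum_1 _ _ hwsum]
  simpa [id] using hcomb

end Euclidean

/-- **A point covered once.** In a finite pure `m`-dimensional simplicial complex in `ℝᵐ`
with all simplices `t₀`-thick, if `F` fixes the vertices and restricts to a `ξ`-distortion
map on each `m`-simplex with `ξ ≤ (1/6)(m/(m+1))t₀²`, then the barycentre `b` of a largest
`m`-simplex satisfies `F⁻¹(F b) = {b}` on the carrier of the complex. -/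
theorem point_covered_once {m : ℕ} (hm : 1 ≤ m)
    (C : Geometry.SimplicialComplex ℝ (EuclideanSpace ℝ (Fin m)))
    (hfin : C.faces.Finite)
    (hpure : ∀ s ∈ C.faces, ∃ τ ∈ C.faces, s ⊆ τ ∧ τ.card = m + 1)
    (t₀ : ℝ) (ht₀ : 0 < t₀)
    (hthick : ∀ s ∈ C.faces, 2 ≤ s.card → t₀ ≤ thickness s)
    (F : EuclideanSpace ℝ (Fin m) → EuclideanSpace ℝ (Fin m))
    (hfix : ∀ s ∈ C.faces, ∀ p ∈ s, F p = p)
    (ξ : ℝ)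
    (hξ : ξ ≤ (1 / 6) * ((m : ℝ) / ((m : ℝ) + 1)) * t₀ ^ 2)
    (hdistort : ∀ s ∈ C.faces, s.card = m + 1 →
      ∀ x ∈ convexHull ℝ (s : Set (EuclideanSpace ℝ (Fin m))),
        ∀ y ∈ convexHull ℝ (s : Set (EuclideanSpace ℝ (Fin m))),
          |‖F x - F y‖ - ‖x - y‖| ≤ ξ * ‖x - y‖)
    (σ : Finset (EuclideanSpace ℝ (Fin m))) (hσ : σ ∈ C.faces) (hσcard : σ.card = m + 1)
    (hσmax : ∀ τ ∈ C.faces, longestEdge τ ≤ longestEdge σ)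
    (b : EuclideanSpace ℝ (Fin m)) (hb : b = ((m : ℝ) + 1)⁻¹ • ∑ p ∈ σ, p) :
    ∀ x ∈ C.space, F x = F b → x = b := by
  classical
  intro x hx hFxb
  have hcard2σ : 1 < σ.card := by omega
  -- the distortion parameter is nonnegative
  have hξ0 : 0 ≤ ξ := by
    by_contra hneg
    push_neg at hneg
    obtain ⟨p, hp, q, hq, hne⟩ := Finset.one_lt_card.mp hcard2σ
    have h := hdistort σ hσ hσcard p (subset_convexHull ℝ _ hp) q (subset_convexHull ℝ _ hq)
    have hpq : (0:ℝ) < ‖p - q‖ := by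
      rw [norm_pos_iff, sub_ne_zero]; exact hne
    nlinarith [abs_nonneg (‖F p - F q‖ - ‖p - q‖)]
  set L : ℝ := longestEdge σ with hLdef
  have hLpos : 0 < L := longestEdge_pos hcard2σ
  have hmR : (1:ℝ) ≤ (m:ℝ) := by exact_mod_cast hm
  have hm1pos : (0:ℝ) < (m:ℝ) + 1 := by positivity
  have hmLpos : (0:ℝ) < (m:ℝ) * L := by positivity
  have hthσ := hthick σ hσ (by omega)
  have haσ : t₀ * ((m:ℝ) * L) ≤ minAltitude σ := by
    have hth' : thickness σ = minAltitude σ / ((m:ℝ) * L) := by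
      rw [thickness, hσcard]; push_cast; ring_nf; rw [hLdef]
    rw [hth'] at hthσ
    exact (le_div_iff₀ hmLpos).mp hthσ
  have hapos : 0 < minAltitude σ := lt_of_lt_of_le (by positivity) haσ
  -- `t₀ ≤ 1`
  have hminle : minAltitude σ ≤ L := by
    obtain ⟨p, hp, q, hq, hne⟩ := Finset.one_lt_card.mp hcard2σ
    have h1 := minAltitude_le (s := σ) hp
    have h2 : Metric.infDist p
        (affineSpan ℝ ((σ : Set (EuclideanSpace ℝ (Fin m))) \ {p}) :
          Set (EuclideanSpace ℝ (Fin m))) ≤ dist p q := by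
      apply Metric.infDist_le_dist_of_mem
      exact subset_affineSpan ℝ _ ⟨hq, by simpa using hne.symm⟩
    exact h1.trans (h2.trans (dist_le_longestEdge hp hq hne))
  have ht₀1 : t₀ ≤ 1 := by nlinarith [haσ, hminle, hmLpos, hLpos, ht₀, hmR]
  have hξ6 : ξ ≤ 1/6 := by
    have hfrac : (m:ℝ)/((m:ℝ)+1) ≤ 1 := by
      rw [div_le_one hm1pos]; linarith
    nlinarith [sq_nonneg t₀, ht₀, ht₀1]
  -- displacement bounds
  have hthσ2 := hthick σ hσ (by omega)
  have hdispσ : ∀ y ∈ convexHull ℝ (σ : Set (EuclideanSpace ℝ (Fin m))),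
      ‖F y - y‖ ≤ ξ * (2 + ξ) * L / t₀ := fun y hy =>
    displacement hm σ (C.indep hσ) hσcard t₀ ξ ht₀ hξ0 hthσ2 F (hfix σ hσ)
      (hdistort σ hσ hσcard) y hy
  have hrpos : 0 < minAltitude σ / ((m:ℝ) + 1) := by positivity
  have hballσ := closedBall_subset_convexHull hm σ (C.indep hσ) hσcard hapos b hb
  have hbmem : b ∈ convexHull ℝ (σ : Set (EuclideanSpace ℝ (Fin m))) :=
    hballσ (mem_closedBall_self hrpos.le)
  -- the simplex containing `x`
  obtain ⟨s, hs, hxs⟩ := Geometry.SimplicialComplex.mem_space_iff.mp hx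
  obtain ⟨τ, hτ, hsub, hτcard⟩ := hpure s hs
  have hxτ : x ∈ convexHull ℝ (τ : Set (EuclideanSpace ℝ (Fin m))) :=
    convexHull_mono (Finset.coe_subset.mpr hsub) hxs
  have hdispx : ‖F x - x‖ ≤ ξ * (2 + ξ) * longestEdge τ / t₀ :=
    displacement hm τ (C.indep hτ) hτcard t₀ ξ ht₀ hξ0 (hthick τ hτ (by omega)) F
      (hfix τ hτ) (hdistort τ hτ hτcard) x hxτ
  have hdispx' : ‖F x - x‖ ≤ ξ * (2 + ξ) * L / t₀ := by
    refine hdispx.trans ?_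
    have h1 : ξ * (2 + ξ) * longestEdge τ ≤ ξ * (2 + ξ) * L :=
      mul_le_mul_of_nonneg_left (hσmax τ hτ) (mul_nonneg hξ0 (by linarith))
    exact (div_le_div_iff_of_pos_right ht₀).mpr h1
  -- `x` is close to `b`
  have hxb : ‖x - b‖ ≤ 2 * (ξ * (2 + ξ) * L / t₀) := by
    have he : x - b = -(F x - x) + (F b - b) := by rw [hFxb]; abel
    calc ‖x - b‖ = ‖-(F x - x) + (F b - b)‖ := by rw [he]
      _ ≤ ‖-(F x - x)‖ + ‖F b - b‖ := norm_add_le _ _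
      _ = ‖F x - x‖ + ‖F b - b‖ := by rw [norm_neg]
      _ ≤ ξ * (2 + ξ) * L / t₀ + ξ * (2 + ξ) * L / t₀ := add_le_add hdispx' (hdispσ b hbmem)
      _ = 2 * (ξ * (2 + ξ) * L / t₀) := by ring
  -- and hence inside `σ`
  have hr2 : 2 * (ξ * (2 + ξ) * L / t₀) ≤ minAltitude σ / ((m:ℝ) + 1) := by
    have hξ' : ξ * ((m:ℝ) + 1) ≤ (1/6) * (m:ℝ) * t₀ ^ 2 := by
      have h := mul_le_mul_of_nonneg_right hξ hm1pos.le
      rwa [show (1/6) * ((m:ℝ)/((m:ℝ)+1)) * t₀ ^ 2 * ((m:ℝ)+1) = (1/6) * (m:ℝ) * t₀ ^ 2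
        from by field_simp] at h
    have hkey : 2 * (ξ * (2 + ξ) * L) * ((m:ℝ) + 1) ≤ ((m:ℝ) * (t₀ * L)) * t₀ := by
      have hpos1 : (0:ℝ) ≤ 2 * (2 + ξ) * L := by nlinarith
      have h2 := mul_le_mul_of_nonneg_left hξ' hpos1
      nlinarith [h2, hLpos, hξ0, hξ6, ht₀, hmR,
        mul_pos (mul_pos (show (0:ℝ) < (m:ℝ) by linarith) (mul_pos ht₀ ht₀)) hLpos]
    have hstep : 2 * (ξ * (2 + ξ) * L / t₀) ≤ (m:ℝ) * (t₀ * L) / ((m:ℝ) + 1) := by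
      rw [show 2 * (ξ * (2 + ξ) * L / t₀) = (2 * (ξ * (2 + ξ) * L)) / t₀ from by ring,
        div_le_div_iff₀ ht₀ hm1pos]
      linarith [hkey]
    refine hstep.trans ?_
    apply (div_le_div_iff_of_pos_right hm1pos).mpr
    calc (m:ℝ) * (t₀ * L) = t₀ * ((m:ℝ) * L) := by ring
      _ ≤ minAltitude σ := haσ
  have hxσ : x ∈ convexHull ℝ (σ : Set (EuclideanSpace ℝ (Fin m))) := by
    apply hballσ
    rw [mem_closedBall, dist_eq_norm]
    exact hxb.trans hr2
  -- conclude by the distortion bound inside `σ`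
  have hfin2 := hdistort σ hσ hσcard x hxσ b hbmem
  rw [hFxb, sub_self, norm_zero, zero_sub, abs_neg, abs_of_nonneg (norm_nonneg _)] at hfin2
  have hnorm0 : ‖x - b‖ = 0 := by nlinarith [norm_nonneg (x - b)]
  exact sub_eq_zero.mp (norm_eq_zero.mp hnorm0)
end

section
/- Distance from the barycentre to the boundary of a full-dimensional simplex: Let v₀, …, v_m be affinely independent points of EuclideanSpace ℝ (Fin m) spanning the m-simplex σ (their convex hull) with minimum altitude a(σ), and let b = (1/(m+1))·(v₀ + ⋯ + v_m) be its barycentre. Then the Euclidean distance from b to the topological frontier of σ is at least a(σ)/(m+1). -/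
/-- **Barycentre–boundary separation.** The barycentre of a full-dimensional simplex
`σ ⊆ ℝᵐ` with minimum altitude `a` is at distance at least `a/(m+1)` from the
topological frontier of `σ`. -/
theorem barycentre_dist_frontier {m : ℕ}
    (v : Fin (m + 1) → EuclideanSpace ℝ (Fin m))
    (hv : AffineIndependent ℝ v)
    (σ : Set (EuclideanSpace ℝ (Fin m)))
    (hσ : σ = convexHull ℝ (Set.range v))
    (a : ℝ)
    (ha : IsLeast {d : ℝ | ∃ i : Fin (m + 1),
      d = Metric.infDist (v i) (affineSpan ℝ (v '' {i}ᶜ) : Set (EuclideanSpace ℝ (Fin m)))} a)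
    (b : EuclideanSpace ℝ (Fin m))
    (hb : b = ((m : ℝ) + 1)⁻¹ • ∑ i, v i) :
    a / ((m : ℝ) + 1) ≤ Metric.infDist b (frontier σ) := by
  classical
  have hm1 : (0:ℝ) < (m:ℝ) + 1 := by positivity
  have hm1' : ((m:ℝ) + 1) ≠ 0 := ne_of_gt hm1
  by_cases ha0 : a ≤ 0
  · calc a / ((m:ℝ)+1) ≤ 0 := div_nonpos_of_nonpos_of_nonneg ha0 hm1.le
      _ ≤ _ := Metric.infDist_nonneg
  push_neg at ha0
  -- the affine basis given by the vertices
  have htop : affineSpan ℝ (Set.range v) = ⊤ := by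
    rw [hv.affineSpan_eq_top_iff_card_eq_finrank_add_one]
    simp [finrank_euclideanSpace_fin]
  let B : AffineBasis (Fin (m+1)) ℝ (EuclideanSpace ℝ (Fin m)) := ⟨v, hv, htop⟩
  have hBv : ∀ j, B j = v j := fun j => rfl
  have hBr : Set.range (B : Fin (m+1) → EuclideanSpace ℝ (Fin m)) = Set.range v := rfl
  have hclosed : IsClosed σ := by
    rw [hσ]; exact ((Set.finite_range v).isCompact_convexHull ℝ).isClosed
  -- key estimate: every frontier point is far from the barycentre
  have key : ∀ x ∈ frontier σ, a / ((m:ℝ)+1) ≤ dist b x := by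
    intro x hx
    rw [hclosed.frontier_eq] at hx
    obtain ⟨hxσ, hxint⟩ := hx
    have hxhull : x ∈ convexHull ℝ (Set.range (B : Fin (m+1) → EuclideanSpace ℝ (Fin m))) := by
      rw [hBr, ← hσ]; exact hxσ
    have hnonneg : ∀ j, 0 ≤ B.coord j x := by
      rwa [B.convexHull_eq_nonneg_coord, Set.mem_setOf_eq] at hxhull
    have hexi : ∃ i, B.coord i x = 0 := by
      by_contra h
      push_neg at h
      apply hxint
      rw [hσ, ← hBr, B.interior_convexHull]
      exact fun i => lt_of_le_of_ne (hnonneg i) (Ne.symm (h i))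
    obtain ⟨i, hi0⟩ := hexi
    set w : Fin (m+1) → ℝ := fun j => B.coord j x with hw
    have hwi0 : w i = 0 := hi0
    have hw1 : ∑ j, w j = 1 := B.sum_coord_apply_eq_one x
    have hxw : ∑ j, w j • v j = x := B.linear_combination_coord_eq_self x
    -- weights on the opposite face
    set W : {j : Fin (m+1) // j ≠ i} → ℝ := fun j => ((m:ℝ)+1) * w j.1 - 1 with hW
    have hsub : ∀ {M : Type} [AddCommMonoid M] (f : Fin (m+1) → M),
        ∑ j : {j : Fin (m+1) // j ≠ i}, f j.1 = ∑ j ∈ Finset.univ.erase i, f j := by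
      intro M _ f
      exact (Finset.sum_subtype (Finset.univ.erase i)
        (fun j => by simp [Finset.mem_erase]) f).symm
    have herase : ∀ {M : Type} [AddCommGroup M] (f : Fin (m+1) → M),
        ∑ j ∈ Finset.univ.erase i, f j = (∑ j, f j) - f i := by
      intro M _ f
      have := Finset.sum_erase_add Finset.univ f (Finset.mem_univ i)
      linear_combination (norm := abel) this
    have hWsum : ∑ j : {j : Fin (m+1) // j ≠ i}, W j = 1 := by
      rw [hW]
      have : ∑ j : {j : Fin (m+1) // j ≠ i}, (((m:ℝ)+1) * w j.1 - 1)
          = ∑ j ∈ Finset.univ.erase i, (((m:ℝ)+1) * w j - 1) :=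
        hsub (fun j => ((m:ℝ)+1) * w j - 1)
      rw [this, Finset.sum_sub_distrib, ← Finset.mul_sum, herase w, hwi0, sub_zero, hw1]
      simp [Finset.card_erase_of_mem]
    set u : EuclideanSpace ℝ (Fin m) := ∑ j : {j : Fin (m+1) // j ≠ i}, W j • v j.1 with hu
    -- u lies in the affine span of the opposite face
    have humem : u ∈ (affineSpan ℝ (v '' {i}ᶜ) : Set (EuclideanSpace ℝ (Fin m))) := by
      have h1 : Finset.univ.affineCombination ℝ (fun j : {j : Fin (m+1) // j ≠ i} => v j.1) W
          ∈ affineSpan ℝ (Set.range (fun j : {j : Fin (m+1) // j ≠ i} => v j.1)) :=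
        affineCombination_mem_affineSpan hWsum _
      have h2 : Finset.univ.affineCombination ℝ (fun j : {j : Fin (m+1) // j ≠ i} => v j.1) W
          = u := Finset.univ.affineCombination_eq_linear_combination _ _ hWsum
      have h3 : Set.range (fun j : {j : Fin (m+1) // j ≠ i} => v j.1) = v '' {i}ᶜ := by
        ext y
        simp only [Set.mem_range, Set.mem_image, Set.mem_compl_iff, Set.mem_singleton_iff]
        exact ⟨fun ⟨j, hj⟩ => ⟨j.1, j.2, hj⟩, fun ⟨j, hj, hjy⟩ => ⟨⟨j, hj⟩, hjy⟩⟩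
      rw [h2, h3] at h1
      exact h1
    -- the algebraic identity
    have hviu : v i - u = (∑ j, v j) - ((m:ℝ)+1) • x := by
      have e1 : u = ((m:ℝ)+1) • (∑ j ∈ Finset.univ.erase i, w j • v j)
          - ∑ j ∈ Finset.univ.erase i, v j := by
        rw [hu]
        have : ∑ j : {j : Fin (m+1) // j ≠ i}, W j • v j.1
            = ∑ j ∈ Finset.univ.erase i, (((m:ℝ)+1) * w j - 1) • v j :=
          hsub (fun j => (((m:ℝ)+1) * w j - 1) • v j)
        rw [this, Finset.smul_sum, ← Finset.sum_sub_distrib]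
        refine Finset.sum_congr rfl fun j _ => ?_
        rw [sub_smul, one_smul, mul_smul]
      have e2 : ∑ j ∈ Finset.univ.erase i, w j • v j = x := by
        rw [herase (fun j => w j • v j), hxw, hwi0, zero_smul, sub_zero]
      have e3 : ∑ j ∈ Finset.univ.erase i, v j = (∑ j, v j) - v i := herase v
      rw [e1, e2, e3]
      abel
    have hbx : b - x = ((m:ℝ)+1)⁻¹ • (v i - u) := by
      rw [hviu, hb, smul_sub, smul_smul, inv_mul_cancel₀ hm1', one_smul]
    -- distances
    have hdist : dist b x = ((m:ℝ)+1)⁻¹ * dist (v i) u := by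
      rw [dist_eq_norm, dist_eq_norm, hbx, norm_smul, Real.norm_eq_abs,
        abs_of_pos (inv_pos.mpr hm1)]
    have hau : a ≤ dist (v i) u := by
      calc a ≤ Metric.infDist (v i) (affineSpan ℝ (v '' {i}ᶜ) :
              Set (EuclideanSpace ℝ (Fin m))) := ha.2 ⟨i, rfl⟩
        _ ≤ dist (v i) u := Metric.infDist_le_dist_of_mem humem
    rw [hdist, div_eq_inv_mul]
    exact mul_le_mul_of_nonneg_left hau (inv_pos.mpr hm1).le
  -- the frontier is nonempty
  have hne : (frontier σ).Nonempty := by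
    by_contra h
    rw [Set.not_nonempty_iff_eq_empty] at h
    -- σ is clopen, hence the whole space
    have hopen : IsOpen σ := by
      have : σ ⊆ interior σ := by
        intro x hxσ
        by_contra hxint
        exact Set.not_nonempty_empty ⟨x, h ▸ ⟨hclosed.closure_eq.symm ▸ hxσ, hxint⟩⟩
      rw [← interior_eq_iff_isOpen]
      exact Set.Subset.antisymm interior_subset this
    have hσne : σ.Nonempty := ⟨v 0, hσ ▸ subset_convexHull ℝ _ ⟨0, rfl⟩⟩
    have huniv : σ = Set.univ := (IsClopen.eq_univ ⟨hclosed, hopen⟩ hσne :)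
    -- but then the space is nontrivial and σ is bounded: contradiction
    obtain ⟨i, hia⟩ := ha.1
    have hSne : (affineSpan ℝ (v '' {i}ᶜ) : Set (EuclideanSpace ℝ (Fin m))).Nonempty := by
      by_contra hS
      rw [Set.not_nonempty_iff_eq_empty] at hS
      rw [hS, Metric.infDist_empty] at hia
      exact absurd hia (ne_of_gt ha0)
    obtain ⟨y, hy⟩ := hSne
    have himne : (v '' {i}ᶜ).Nonempty := by
      by_contra him
      rw [Set.not_nonempty_iff_eq_empty] at him
      rw [him] at hy
      simp [AffineSubspace.span_empty] at hy
    obtain ⟨z, ⟨j, hji, hjz⟩⟩ := himne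
    have hvij : v j ≠ v i := fun hc => hji (hv.injective hc)
    have : Nontrivial (EuclideanSpace ℝ (Fin m)) := ⟨⟨v j, v i, hvij⟩⟩
    have hbdd : Bornology.IsBounded σ := by
      rw [hσ]; exact ((Set.finite_range v).isCompact_convexHull ℝ).isBounded
    rw [huniv] at hbdd
    exact NormedSpace.unbounded_univ ℝ (EuclideanSpace ℝ (Fin m)) hbdd
  -- conclude
  have : Nonempty (frontier σ) := hne.to_subtype
  rw [Metric.infDist_eq_iInf]
  exact le_ciInf fun y => key y.1 y.2
end

section
/- Differential bounds imply distortion: Let U ⊆ EuclideanSpace ℝ (Fin m) be open, let ω ⊆ U be convex, and let F : U → EuclideanSpace ℝ (Fin m) be differentiable on U and injective on U. Suppose there is a convex set V with F(ω) ⊆ V ⊆ F(U), and suppose ξ < 1 and for every x ∈ U and every vector v, (1 − ξ)·‖v‖ ≤ ‖(fderiv ℝ F x) v‖ ≤ (1 + ξ)·‖v‖. Then the restriction of F to ω is a ξ-distortion map: |‖F x − F y‖ − ‖x − y‖| ≤ ξ·‖x − y‖ for all x, y ∈ ω. -/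
open Metric Set Function Filter
open scoped Topology
open scoped RealInnerProductSpace

/-- Local surjectivity for differentiable maps with everywhere-invertible derivative:
no Brouwer needed, by minimizing `‖F y - w‖` over a small closed ball. -/
lemma aux_local_open {E : Type*} [NormedAddCommGroup E] [InnerProductSpace ℝ E]
    [FiniteDimensional ℝ E]
    {U : Set E} (hU : IsOpen U) {F : E → E} (hdiff : ∀ x ∈ U, DifferentiableAt ℝ F x)
    {c : ℝ} (hc : 0 < c)
    (hbnd : ∀ x ∈ U, ∀ v : E, c * ‖v‖ ≤ ‖fderiv ℝ F x v‖)
    {x : E} (hx : x ∈ U) {ε : ℝ} (hε : 0 < ε) :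
    ∃ δ > 0, ∀ w, dist w (F x) < δ → ∃ y ∈ U, F y = w ∧ dist y x ≤ ε := by
  obtain ⟨r₀, hr₀pos, hr₀U⟩ : ∃ r > 0, closedBall x r ⊆ U :=
    (Metric.nhds_basis_closedBall.mem_iff).1 (hU.mem_nhds hx)
  have happrox := ((hdiff x hx).hasFDerivAt.isLittleO).def (half_pos hc)
  obtain ⟨r₁, hr₁pos, hr₁⟩ := Metric.eventually_nhds_iff.1 happrox
  set r : ℝ := min (min r₀ (r₁ / 2)) ε with hr_def
  have hrpos : 0 < r := lt_min (lt_min hr₀pos (half_pos hr₁pos)) hε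
  have hrr₀ : r ≤ r₀ := le_trans (min_le_left _ _) (min_le_left _ _)
  have hrr₁ : r < r₁ := lt_of_le_of_lt (le_trans (min_le_left _ _) (min_le_right _ _))
    (by linarith)
  have hrε : r ≤ ε := min_le_right _ _
  have hrU : closedBall x r ⊆ U := fun y hy =>
    hr₀U (closedBall_subset_closedBall hrr₀ hy)
  have hlow : ∀ y ∈ closedBall x r, c / 2 * ‖y - x‖ ≤ ‖F y - F x‖ := by
    intro y hy
    have hyr1 : dist y x < r₁ := lt_of_le_of_lt (mem_closedBall.1 hy) hrr₁
    have h1 := hr₁ hyr1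
    have h2 := hbnd x hx (y - x)
    have h3 : ‖fderiv ℝ F x (y - x)‖ ≤ ‖F y - F x‖ + ‖F y - F x - fderiv ℝ F x (y - x)‖ := by
      have h4 := norm_sub_le (F y - F x) (F y - F x - fderiv ℝ F x (y - x))
      have h5 : F y - F x - (F y - F x - fderiv ℝ F x (y - x)) = fderiv ℝ F x (y - x) := by
        abel
      rw [h5] at h4
      exact h4
    linarith
  refine ⟨c * r / 4, by positivity, fun w hw => ?_⟩
  have hcont : ContinuousOn (fun y => ‖F y - w‖) (closedBall x r) :=
    ContinuousOn.norm (ContinuousOn.sub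
      (fun y hy => (hdiff y (hrU hy)).continuousAt.continuousWithinAt) continuousOn_const)
  obtain ⟨y₀, hy₀mem, hy₀min⟩ := (isCompact_closedBall x r).exists_isMinOn
    ⟨x, mem_closedBall_self hrpos.le⟩ hcont
  have hy₀U : y₀ ∈ U := hrU hy₀mem
  have hy₀x : ‖F y₀ - w‖ ≤ ‖F x - w‖ := hy₀min (mem_closedBall_self hrpos.le)
  have hwFx : ‖F x - w‖ < c * r / 4 := by rw [← dist_eq_norm, dist_comm]; exact hw
  have hy₀int : dist y₀ x < r := by
    rcases lt_or_eq_of_le (mem_closedBall.1 hy₀mem) with h | h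
    · exact h
    · exfalso
      have h5 := hlow y₀ hy₀mem
      rw [← dist_eq_norm, h] at h5
      have h6 : ‖F y₀ - F x‖ ≤ ‖F y₀ - w‖ + ‖F x - w‖ := by
        have h7 := norm_sub_le (F y₀ - w) (F x - w)
        have h8 : F y₀ - w - (F x - w) = F y₀ - F x := by abel
        rw [h8] at h7
        linarith [norm_sub_le (F y₀ - w) (F x - w)]
      nlinarith
  have hnbhd : closedBall x r ∈ 𝓝 y₀ :=
    mem_of_superset (isOpen_ball.mem_nhds (mem_ball.2 hy₀int)) ball_subset_closedBall
  have hlocmin0 : IsLocalMin (fun y => ‖F y - w‖) y₀ := hy₀min.isLocalMin hnbhd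
  have hlocmin : IsLocalMin (fun y => ⟪F y - w, F y - w⟫) y₀ := by
    refine Filter.Eventually.mono hlocmin0 (fun y hy => ?_)
    simp only [real_inner_self_eq_norm_mul_norm]
    exact mul_self_le_mul_self (norm_nonneg _) hy
  set A' : E →L[ℝ] E := fderiv ℝ F y₀ with hA'
  have hFy₀ : HasFDerivAt (fun y => F y - w) A' y₀ :=
    ((hdiff y₀ hy₀U).hasFDerivAt).sub_const w
  have hDer : HasFDerivAt (fun y => ⟪F y - w, F y - w⟫)
      ((fderivInnerCLM ℝ (F y₀ - w, F y₀ - w)).comp (A'.prod A')) y₀ :=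
    hFy₀.inner ℝ hFy₀
  have hD0 := hlocmin.hasFDerivAt_eq_zero hDer
  have hinjA : Function.Injective A' := by
    intro u v huv
    have h2 := hbnd y₀ hy₀U (u - v)
    rw [← hA', map_sub, huv, sub_self, norm_zero] at h2
    have h3 : ‖u - v‖ ≤ 0 := by nlinarith [norm_nonneg (u - v)]
    have h4 : u - v = 0 := norm_le_zero_iff.1 h3
    exact sub_eq_zero.1 h4
  have hsurjA : Function.Surjective A' :=
    LinearMap.injective_iff_surjective.1 hinjA
  obtain ⟨v, hv⟩ := hsurjA (F y₀ - w)
  have hDv := DFunLike.congr_fun hD0 v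
  simp only [ContinuousLinearMap.comp_apply, ContinuousLinearMap.prod_apply,
    fderivInnerCLM_apply, ContinuousLinearMap.zero_apply, hv] at hDv
  have hzero : F y₀ - w = 0 := by
    rw [← inner_self_eq_zero (𝕜 := ℝ)]
    have : ⟪F y₀ - w, F y₀ - w⟫ + ⟪F y₀ - w, F y₀ - w⟫ = 0 := by
      rw [real_inner_comm (F y₀ - w) (F y₀ - w)] at hDv ⊢
      linarith [hDv]
    linarith
  exact ⟨y₀, hy₀U, by rwa [sub_eq_zero] at hzero,
    le_trans (mem_closedBall.1 hy₀mem) hrε⟩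

/-- **Differential bounds imply distortion.** If `F` is differentiable and injective on an
open set `U`, `ω ⊆ U` is convex, `F(ω) ⊆ V ⊆ F(U)` for some convex `V`, `ξ < 1`, and the
differential satisfies `(1-ξ)‖v‖ ≤ ‖dF_x v‖ ≤ (1+ξ)‖v‖` everywhere on `U`, then the
restriction of `F` to `ω` is a `ξ`-distortion map. -/
theorem differential_bounds_imply_distortion {m : ℕ}
    (U ω V : Set (EuclideanSpace ℝ (Fin m))) (hU : IsOpen U)
    (hωU : ω ⊆ U) (hω : Convex ℝ ω) (hV : Convex ℝ V)
    (F : EuclideanSpace ℝ (Fin m) → EuclideanSpace ℝ (Fin m))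
    (hdiff : ∀ x ∈ U, DifferentiableAt ℝ F x)
    (hinj : Set.InjOn F U)
    (hωV : F '' ω ⊆ V) (hVU : V ⊆ F '' U)
    (ξ : ℝ) (hξ : ξ < 1)
    (hbnd : ∀ x ∈ U, ∀ v : EuclideanSpace ℝ (Fin m),
      (1 - ξ) * ‖v‖ ≤ ‖fderiv ℝ F x v‖ ∧ ‖fderiv ℝ F x v‖ ≤ (1 + ξ) * ‖v‖) :
    ∀ x ∈ ω, ∀ y ∈ ω, |‖F x - F y‖ - ‖x - y‖| ≤ ξ * ‖x - y‖ := by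
  intro x hx y hy
  by_cases hxy : x = y
  · simp [hxy]
  have hc : (0:ℝ) < 1 - ξ := by linarith
  have hbnd' : ∀ z ∈ U, ∀ v : EuclideanSpace ℝ (Fin m),
      (1 - ξ) * ‖v‖ ≤ ‖fderiv ℝ F z v‖ := fun z hz v => (hbnd z hz v).1
  have hxU : x ∈ U := hωU hx
  have hyU : y ∈ U := hωU hy
  have hvpos : 0 < ‖x - y‖ := by rw [norm_pos_iff]; exact sub_ne_zero.2 hxy
  have h1ξ : (0:ℝ) < 1 + ξ := by
    have h := hbnd x hxU (x - y)
    nlinarith [h.1, h.2]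
  -- upper bound via mean value inequality on ω
  have hup : ‖F x - F y‖ ≤ (1 + ξ) * ‖x - y‖ :=
    hω.norm_image_sub_le_of_norm_hasFDerivWithin_le
      (f' := fun z => fderiv ℝ F z)
      (fun z hz => ((hdiff z (hωU hz)).hasFDerivAt).hasFDerivWithinAt)
      (fun z hz => ContinuousLinearMap.opNorm_le_bound _ h1ξ.le
        (fun v => (hbnd z (hωU hz) v).2))
      hy hx
  -- the inverse map
  set G := Function.invFunOn F U with hGdef
  have hGF : ∀ z ∈ U, G (F z) = z := fun z hz => hinj.leftInvOn_invFunOn hz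
  have key : ∀ w ∈ V, HasFDerivWithinAt G (fderiv ℝ G w) V w ∧
      ‖fderiv ℝ G w‖ ≤ 1 / (1 - ξ) := by
    intro w hwV
    obtain ⟨z, hzU, hzw⟩ := hVU hwV
    have hGw : G w = z := by rw [← hzw, hGF z hzU]
    -- continuity of G at w
    have hGcont : ContinuousAt G w := by
      rw [Metric.continuousAt_iff]
      intro ε hε
      obtain ⟨δ, hδpos, hδ⟩ := aux_local_open hU hdiff hc hbnd' hzU (half_pos hε)
      refine ⟨δ, hδpos, fun {w'} hw' => ?_⟩
      obtain ⟨y', hy'U, hy'w, hy'z⟩ := hδ w' (by rwa [hzw])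
      have hGw' : G w' = y' := by rw [← hy'w, hGF y' hy'U]
      rw [hGw', hGw]
      exact lt_of_le_of_lt hy'z (half_lt_self hε)
    -- F(G w') = w' near w
    have hfg : ∀ᶠ w' in 𝓝 w, F (G w') = w' := by
      obtain ⟨δ, hδpos, hδ⟩ := aux_local_open hU hdiff hc hbnd' hzU one_pos
      have hball : Metric.ball w δ ∈ 𝓝 w := Metric.ball_mem_nhds w hδpos
      refine Filter.eventually_of_mem hball (fun w' hw' => ?_)
      obtain ⟨y', hy'U, hy'w, _⟩ := hδ w' (by rw [hzw]; exact mem_ball.1 hw')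
      rw [← hy'w, hGF y' hy'U]
    -- the derivative as a continuous linear equiv
    set A : EuclideanSpace ℝ (Fin m) →L[ℝ] EuclideanSpace ℝ (Fin m) := fderiv ℝ F z with hA
    have hinjA : Function.Injective A := by
      intro u v huv
      have h2 := hbnd' z hzU (u - v)
      rw [← hA, map_sub, huv, sub_self, norm_zero] at h2
      have h3 : ‖u - v‖ ≤ 0 := by nlinarith [norm_nonneg (u - v)]
      exact sub_eq_zero.1 (norm_le_zero_iff.1 h3)
    have hsurjA : Function.Surjective A.toLinearMap :=
      LinearMap.injective_iff_surjective.1 hinjA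
    let e : EuclideanSpace ℝ (Fin m) ≃L[ℝ] EuclideanSpace ℝ (Fin m) :=
      (LinearEquiv.ofBijective A.toLinearMap ⟨hinjA, hsurjA⟩).toContinuousLinearEquiv
    have hecoe : ∀ v, e v = A v := fun v => rfl
    have heA : (e : EuclideanSpace ℝ (Fin m) →L[ℝ] EuclideanSpace ℝ (Fin m)) = A := by
      ext v i; rfl
    have hFz : HasFDerivAt F
        (e : EuclideanSpace ℝ (Fin m) →L[ℝ] EuclideanSpace ℝ (Fin m)) (G w) := by
      rw [hGw, heA, hA]
      exact (hdiff z hzU).hasFDerivAt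
    have hDG : HasFDerivAt G
        (e.symm : EuclideanSpace ℝ (Fin m) →L[ℝ] EuclideanSpace ℝ (Fin m)) w :=
      HasFDerivAt.of_local_left_inverse hGcont hFz hfg
    have hfd : fderiv ℝ G w =
        (e.symm : EuclideanSpace ℝ (Fin m) →L[ℝ] EuclideanSpace ℝ (Fin m)) := hDG.fderiv
    constructor
    · rw [hfd]; exact hDG.hasFDerivWithinAt
    · rw [hfd]
      refine ContinuousLinearMap.opNorm_le_bound _ (by positivity) (fun u => ?_)
      have h2 := hbnd' z hzU (e.symm u)
      have h3 : A (e.symm u) = u := by rw [← hecoe]; exact e.apply_symm_apply u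
      rw [← hA, h3] at h2
      rw [div_mul_eq_mul_div, one_mul, le_div_iff₀ hc, mul_comm]
      exact h2
  -- lower bound via mean value inequality on V
  have hlowb : ‖x - y‖ ≤ 1 / (1 - ξ) * ‖F x - F y‖ := by
    have h := hV.norm_image_sub_le_of_norm_hasFDerivWithin_le
      (f' := fun w => fderiv ℝ G w)
      (fun w hw => (key w hw).1) (fun w hw => (key w hw).2)
      (hωV ⟨y, hy, rfl⟩) (hωV ⟨x, hx, rfl⟩)
    rwa [hGF x hxU, hGF y hyU] at h
  have hlowb' : (1 - ξ) * ‖x - y‖ ≤ ‖F x - F y‖ := by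
    have h4 : (1 - ξ) * (1 / (1 - ξ)) = 1 := mul_one_div_cancel hc.ne'
    nlinarith [mul_le_mul_of_nonneg_left hlowb hc.le]
  rw [abs_le]
  constructor <;> nlinarith
end

section
/- Federer's tangent estimate from empty tangent balls: Let M ⊆ EuclideanSpace ℝ (Fin N), let x ∈ M, let R > 0, and let T be a linear subspace such that for every unit vector u in the orthogonal complement T⊥, the open ball of radius R centred at x + R•u is disjoint from M. Then for every y ∈ M, infDist (y − x) T ≤ ‖y − x‖²/(2R); equivalently, the sine of the angle between the segment [x, y] and T is at most ‖y − x‖/(2R). -/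
/-- **Federer's tangent estimate from empty tangent balls.** If every open ball of radius
`R` tangent to `M` at `x` from a direction normal to `T` misses `M`, then every `y ∈ M`
satisfies `infDist (y - x) T ≤ ‖y - x‖² / (2R)`. -/
theorem federer_tangent_estimate {N : ℕ}
    (M : Set (EuclideanSpace ℝ (Fin N)))
    (x : EuclideanSpace ℝ (Fin N)) (hx : x ∈ M)
    (R : ℝ) (hR : 0 < R)
    (T : Submodule ℝ (EuclideanSpace ℝ (Fin N)))
    (hball : ∀ u : EuclideanSpace ℝ (Fin N), ‖u‖ = 1 → u ∈ Tᗮ →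
      M ∩ Metric.ball (x + R • u) R = ∅) :
    ∀ y ∈ M, Metric.infDist (y - x) (T : Set (EuclideanSpace ℝ (Fin N))) ≤
      ‖y - x‖ ^ 2 / (2 * R) := by
  intro y hy
  set v : EuclideanSpace ℝ (Fin N) := y - x with hv
  set p : EuclideanSpace ℝ (Fin N) := (T.orthogonalProjectionOnto v : EuclideanSpace ℝ (Fin N))
  set q : EuclideanSpace ℝ (Fin N) := v - p with hq
  have hpT : p ∈ T := (T.orthogonalProjectionOnto v).2
  have hqT : q ∈ Tᗮ := T.sub_starProjection_mem_orthogonal v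
  have hle : Metric.infDist v (T : Set (EuclideanSpace ℝ (Fin N))) ≤ ‖q‖ := by
    have := Metric.infDist_le_dist_of_mem (x := v) hpT
    simpa [dist_eq_norm] using this
  refine hle.trans ?_
  rcases eq_or_ne q 0 with h0 | h0
  · simp [h0]
    positivity
  · set u : EuclideanSpace ℝ (Fin N) := ‖q‖⁻¹ • q with hu
    have hqn : (0:ℝ) < ‖q‖ := norm_pos_iff.mpr h0
    have hun : ‖u‖ = 1 := by
      simp [hu, norm_smul, abs_of_nonneg (le_of_lt (inv_pos.mpr hqn)),
        inv_mul_cancel₀ hqn.ne']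
    have huT : u ∈ Tᗮ := Submodule.smul_mem _ _ hqT
    have hdisj := hball u hun huT
    have hynot : y ∉ Metric.ball (x + R • u) R := by
      intro hmem
      have : y ∈ M ∩ Metric.ball (x + R • u) R := ⟨hy, hmem⟩
      simp [hdisj] at this
    have hdist : R ≤ ‖v - R • u‖ := by
      have := hynot
      rw [Metric.mem_ball, not_lt, dist_eq_norm] at this
      have heq : y - (x + R • u) = v - R • u := by
        simp [hv]
        abel
      rwa [heq] at this
    have hsq : R ^ 2 ≤ ‖v - R • u‖ ^ 2 := by
      have h1 : (0:ℝ) ≤ R := hR.le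
      nlinarith [norm_nonneg (v - R • u)]
    have hexp : ‖v - R • u‖ ^ 2 = ‖v‖ ^ 2 - 2 * (R * inner ℝ v u) + R ^ 2 := by
      rw [norm_sub_sq_real v (R • u), real_inner_smul_right, norm_smul, hun,
        Real.norm_eq_abs, abs_of_nonneg hR.le]
      ring
    have hinner : (inner ℝ v u : ℝ) = ‖q‖ := by
      have hvpq : v = p + q := by simp [hq]
      have hpu : (inner ℝ p u : ℝ) = 0 := Submodule.inner_right_of_mem_orthogonal hpT huT
      rw [hvpq, inner_add_left, hpu, hu, real_inner_smul_right,
        real_inner_self_eq_norm_sq]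
      field_simp
      ring
    have : R * ‖q‖ ≤ ‖v‖ ^ 2 / 2 := by nlinarith [hsq, hexp, hinner]
    rw [le_div_iff₀ (by positivity)]
    nlinarith
end

section
/- Whitney's angle bound: Let v₀, …, v_j be affinely independent points of EuclideanSpace ℝ (Fin N) spanning a j-simplex σ with thickness t and longest edge length L, and let K be an affine subspace whose direction has dimension k ≥ j. If the distance from each vertex v_i to K is at most η, then sin ∠(σ, K) ≤ 2η/(tL); that is, for every vector u in the direction of the affine span of v₀, …, v_j, infDist(u, direction of K) ≤ (2η/(tL))·‖u‖. -/
/-- **Whitney's angle bound.** If all vertices of a `j`-simplex `σ` with thickness `t` and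
longest edge length `L` lie within distance `η` of an affine subspace `K` of dimension
`k ≥ j`, then `sin ∠(σ, K) ≤ 2η/(tL)`: every vector `u` in the direction of the affine
hull of the vertices satisfies `infDist u K.direction ≤ (2η/(tL))·‖u‖`. -/
theorem whitney_angle_bound {N j : ℕ} (hj : 1 ≤ j)
    (v : Fin (j + 1) → EuclideanSpace ℝ (Fin N))
    (hv : AffineIndependent ℝ v)
    (L a t η : ℝ)
    (hL : IsGreatest {d : ℝ | ∃ i k : Fin (j + 1), i ≠ k ∧ d = ‖v i - v k‖} L)
    (ha : IsLeast {d : ℝ | ∃ i : Fin (j + 1),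
      d = Metric.infDist (v i) (affineSpan ℝ (v '' {i}ᶜ) : Set (EuclideanSpace ℝ (Fin N)))} a)
    (ht : t = a / (j * L))
    (K : AffineSubspace ℝ (EuclideanSpace ℝ (Fin N)))
    (hKne : (K : Set (EuclideanSpace ℝ (Fin N))).Nonempty)
    (hdim : j ≤ Module.finrank ℝ K.direction)
    (hη : ∀ i, Metric.infDist (v i) (K : Set (EuclideanSpace ℝ (Fin N))) ≤ η) :
    ∀ u ∈ (affineSpan ℝ (Set.range v)).direction,
      Metric.infDist u (K.direction : Set (EuclideanSpace ℝ (Fin N))) ≤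
        (2 * η / (t * L)) * ‖u‖ := by
  classical
  open Metric EuclideanGeometry in
  open scoped RealInnerProductSpace in
  intro u hu
  -- positivity of L
  obtain ⟨⟨iL, kL, hik, hLeq⟩, hLub⟩ := hL
  have hLpos : 0 < L := by
    rw [hLeq, norm_pos_iff, sub_ne_zero]
    exact fun h => hik (hv.injective h)
  -- positivity of a
  obtain ⟨⟨ia, haeq⟩, halb⟩ := ha
  have hnt : Nontrivial (Fin (j + 1)) := by
    refine ⟨0, 1, ?_⟩
    have : (1 : ℕ) < j + 1 := by omega
    simp [Fin.ext_iff, Fin.val_one, Nat.mod_eq_of_lt this]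
  have hapos : 0 < a := by
    rw [haeq]
    have hclosed : IsClosed (affineSpan ℝ (v '' {ia}ᶜ) : Set (EuclideanSpace ℝ (Fin N))) :=
      AffineSubspace.closed_of_finiteDimensional _
    obtain ⟨k, hk⟩ := exists_ne ia
    have hne : (affineSpan ℝ (v '' {ia}ᶜ) : Set (EuclideanSpace ℝ (Fin N))).Nonempty :=
      ⟨v k, mem_affineSpan ℝ (Set.mem_image_of_mem v hk)⟩
    have hnm : v ia ∉ affineSpan ℝ (v '' {ia}ᶜ) := by
      have := hv.notMem_affineSpan_diff ia Set.univ
      simpa [Set.compl_eq_univ_diff] using this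
    exact (hclosed.notMem_iff_infDist_pos hne).mp hnm
  have hη0 : 0 ≤ η := le_trans Metric.infDist_nonneg (hη 0)
  -- decompose u
  rw [direction_affineSpan, vectorSpan_range_eq_span_range_vsub_right_ne ℝ v 0] at hu
  obtain ⟨c, hc⟩ := (Submodule.mem_span_range_iff_exists_fun ℝ).mp hu
  -- coefficient bound
  have hcoef : ∀ i : {x : Fin (j+1) // x ≠ 0}, |c i| ≤ ‖u‖ / a := by
    intro i
    set F := affineSpan ℝ (v '' {(i : Fin (j+1))}ᶜ) with hF
    have h0F : v 0 ∈ F := mem_affineSpan ℝ (Set.mem_image_of_mem v (by simpa using (Ne.symm i.2)))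
    haveI : Nonempty F := ⟨⟨v 0, h0F⟩⟩
    set q : EuclideanSpace ℝ (Fin N) :=
      (EuclideanGeometry.orthogonalProjection F (v ↑i) : EuclideanSpace ℝ (Fin N)) with hq
    set n : EuclideanSpace ℝ (Fin N) := v ↑i - q with hn
    have hqF : q ∈ F := EuclideanGeometry.orthogonalProjection_mem _
    have hn_orth : n ∈ F.directionᗮ := by
      simpa [hn, vsub_eq_sub] using
        EuclideanGeometry.vsub_orthogonalProjection_mem_direction_orthogonal F (v ↑i)
    have hna : a ≤ ‖n‖ := by
      refine le_trans (halb ⟨↑i, rfl⟩) ?_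
      calc Metric.infDist (v ↑i) (F : Set (EuclideanSpace ℝ (Fin N)))
          ≤ dist (v ↑i) q := Metric.infDist_le_dist_of_mem hqF
        _ = ‖n‖ := by rw [dist_eq_norm]
    have hinner : ⟪u, n⟫ = c i * (‖n‖ * ‖n‖) := by
      rw [← hc, sum_inner]
      have hzero : ∀ k : {x : Fin (j+1) // x ≠ 0}, k ≠ i →
          ⟪c k • (v ↑k -ᵥ v 0), n⟫ = 0 := by
        intro k hk
        have hkF : v ↑k ∈ F := mem_affineSpan ℝ (Set.mem_image_of_mem v
          (by simpa using fun h => hk (Subtype.ext h)))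
        have hmem : v ↑k -ᵥ v 0 ∈ F.direction := AffineSubspace.vsub_mem_direction hkF h0F
        rw [real_inner_smul_left, (Submodule.mem_orthogonal _ _).mp hn_orth _ hmem, mul_zero]
      rw [Finset.sum_eq_single i (fun k _ hk => hzero k hk) (by simp)]
      have heq : v ↑i -ᵥ v 0 = n + (q - v 0) := by simp [hn, vsub_eq_sub]
      have hqv : (⟪q - v 0, n⟫ : ℝ) = 0 := (Submodule.mem_orthogonal _ _).mp hn_orth _
        (by simpa [vsub_eq_sub] using AffineSubspace.vsub_mem_direction hqF h0F)
      rw [real_inner_smul_left, heq, inner_add_left, real_inner_self_eq_norm_mul_norm,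
        hqv, add_zero]
    have hnpos : 0 < ‖n‖ := lt_of_lt_of_le hapos hna
    have h1 : |c i| * (‖n‖ * ‖n‖) ≤ ‖u‖ * ‖n‖ := by
      calc |c i| * (‖n‖ * ‖n‖) = |⟪u, n⟫| := by
            rw [hinner, abs_mul, abs_of_nonneg (mul_nonneg (norm_nonneg n) (norm_nonneg n))]
        _ ≤ ‖u‖ * ‖n‖ := abs_real_inner_le_norm _ _
    have h2 : |c i| * ‖n‖ ≤ ‖u‖ :=
      (mul_le_mul_iff_of_pos_right hnpos).mp (by linarith [h1] : |c i| * ‖n‖ * ‖n‖ ≤ ‖u‖ * ‖n‖)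
    rw [le_div_iff₀ hapos]
    calc |c i| * a ≤ |c i| * ‖n‖ := mul_le_mul_of_nonneg_left hna (abs_nonneg _)
      _ ≤ ‖u‖ := h2
  -- nearest points on K
  have hKclosed : IsClosed (K : Set (EuclideanSpace ℝ (Fin N))) :=
    AffineSubspace.closed_of_finiteDimensional _
  have hp : ∀ k : Fin (j+1), ∃ p ∈ K, dist (v k) p ≤ η := by
    intro k
    obtain ⟨p, hpK, hpd⟩ := hKclosed.exists_infDist_eq_dist hKne (v k)
    exact ⟨p, hpK, hpd ▸ hη k⟩
  choose p hpK hpd using hp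
  set w : EuclideanSpace ℝ (Fin N) := ∑ i : {x : Fin (j+1) // x ≠ 0}, c i • (p ↑i - p 0) with hw
  have hwK : w ∈ K.direction := by
    refine Submodule.sum_mem _ fun i _ => Submodule.smul_mem _ _ ?_
    simpa [vsub_eq_sub] using AffineSubspace.vsub_mem_direction (hpK ↑i) (hpK 0)
  have key : Metric.infDist u (K.direction : Set (EuclideanSpace ℝ (Fin N))) ≤
      j * (‖u‖ / a * (2 * η)) :=
    calc Metric.infDist u (K.direction : Set (EuclideanSpace ℝ (Fin N)))
        ≤ dist u w := Metric.infDist_le_dist_of_mem hwK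
      _ = ‖∑ i : {x : Fin (j+1) // x ≠ 0}, c i • ((v ↑i - v 0) - (p ↑i - p 0))‖ := by
          rw [dist_eq_norm, ← hc, hw, ← Finset.sum_sub_distrib]
          congr 1
          refine Finset.sum_congr rfl fun i _ => ?_
          rw [vsub_eq_sub, ← smul_sub]
      _ ≤ ∑ i : {x : Fin (j+1) // x ≠ 0}, ‖c i • ((v ↑i - v 0) - (p ↑i - p 0))‖ :=
          norm_sum_le _ _
      _ ≤ ∑ _i : {x : Fin (j+1) // x ≠ 0}, ‖u‖ / a * (2 * η) := by
          refine Finset.sum_le_sum fun i _ => ?_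
          rw [norm_smul, Real.norm_eq_abs]
          refine mul_le_mul (hcoef i) ?_ (norm_nonneg _) (by positivity)
          calc ‖(v ↑i - v 0) - (p ↑i - p 0)‖ = ‖(v ↑i - p ↑i) - (v 0 - p 0)‖ := by
                congr 1; abel
            _ ≤ ‖v ↑i - p ↑i‖ + ‖v 0 - p 0‖ := norm_sub_le _ _
            _ ≤ η + η := add_le_add (by rw [← dist_eq_norm]; exact hpd _)
                (by rw [← dist_eq_norm]; exact hpd _)
            _ = 2 * η := by ring
      _ = j * (‖u‖ / a * (2 * η)) := by
          rw [Finset.sum_const, Finset.card_univ, nsmul_eq_mul]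
          congr 2
          simp
  -- final arithmetic
  have hjne : (j : ℝ) ≠ 0 := Nat.cast_ne_zero.mpr (by omega)
  have htL : t * L = a / j := by
    rw [ht]; field_simp
  have harith : (2 * η / (t * L)) * ‖u‖ = j * (‖u‖ / a * (2 * η)) := by
    rw [htL]
    field_simp
  rw [harith]
  exact key
end

section
/- Simplices lie close to the manifold: Let M ⊆ E := EuclideanSpace ℝ (Fin N), let σ ⊆ E be the convex hull of affinely independent points v₀, …, v_j ∈ M with longest edge length L, and let R > 0. Suppose for each x ∈ σ we are given a point π(x) ∈ M and a linear subspace T(x) of E such that: ‖x − π(x)‖ = infDist x M (π(x) is a closest point of M to x); x − π(x) is orthogonal to every vector of T(x); and for all z ∈ M, infDist (z − π(x)) (T(x)) ≤ ‖z − π(x)‖²/(2R). Then for all x, y ∈ σ, the Euclidean distance from y to the affine flat π(x) + T(x) is at most 2L²/R, and in particular infDist x M ≤ 2L²/R for all x ∈ σ. -/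
open Metric Set

/-- Distance to a nonempty convex set is a convex function. -/
lemma convexOn_infDist_aux {E : Type*} [NormedAddCommGroup E] [NormedSpace ℝ E]
    {S : Set E} (hS : Convex ℝ S) (hne : S.Nonempty) :
    ConvexOn ℝ Set.univ (fun y => Metric.infDist y S) := by
  refine ⟨convex_univ, fun y1 _ y2 _ a b ha hb hab => ?_⟩
  refine le_of_forall_pos_le_add fun ε hε => ?_
  obtain ⟨p1, hp1, hd1⟩ := (Metric.infDist_lt_iff hne).mp
    (show infDist y1 S < infDist y1 S + ε by linarith)
  obtain ⟨p2, hp2, hd2⟩ := (Metric.infDist_lt_iff hne).mp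
    (show infDist y2 S < infDist y2 S + ε by linarith)
  have hmem : a • p1 + b • p2 ∈ S := hS hp1 hp2 ha hb hab
  have hle : dist (a • y1 + b • y2) (a • p1 + b • p2) ≤ a * dist y1 p1 + b * dist y2 p2 := by
    rw [dist_eq_norm, dist_eq_norm, dist_eq_norm]
    have : a • y1 + b • y2 - (a • p1 + b • p2) = a • (y1 - p1) + b • (y2 - p2) := by
      module
    rw [this]
    calc ‖a • (y1 - p1) + b • (y2 - p2)‖ ≤ ‖a • (y1 - p1)‖ + ‖b • (y2 - p2)‖ :=
          norm_add_le _ _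
      _ = a * ‖y1 - p1‖ + b * ‖y2 - p2‖ := by
          rw [norm_smul, norm_smul, Real.norm_of_nonneg ha, Real.norm_of_nonneg hb]
  calc infDist (a • y1 + b • y2) S ≤ dist (a • y1 + b • y2) (a • p1 + b • p2) :=
        Metric.infDist_le_dist_of_mem hmem
    _ ≤ a * dist y1 p1 + b * dist y2 p2 := hle
    _ ≤ a * (infDist y1 S + ε) + b * (infDist y2 S + ε) := by
        gcongr <;> first | exact hd1.le | exact hd2.le | positivity
    _ = a • infDist y1 S + b • infDist y2 S + ε := by
        simp only [smul_eq_mul]; nlinarith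

/-- **Simplices lie close to the manifold.** Let `σ` be a simplex with vertices on
`M ⊆ ℝᴺ` and longest edge length `L`. If for each `x ∈ σ`, `π x` is a closest point of
`M` to `x`, `x - π x` is normal to the tangent space `T x` at `π x`, and Federer's
tangent estimate holds at `π x` with reach bound `R`, then each `y ∈ σ` lies within
`2L²/R` of every flat `π x + T x`, and `infDist x M ≤ 2L²/R` for all `x ∈ σ`. -/
theorem simplices_lie_close_to_manifold {N j : ℕ}
    (M : Set (EuclideanSpace ℝ (Fin N)))
    (v : Fin (j + 1) → EuclideanSpace ℝ (Fin N))
    (hv : AffineIndependent ℝ v) (hvM : ∀ i, v i ∈ M)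
    (σ : Set (EuclideanSpace ℝ (Fin N)))
    (hσ : σ = convexHull ℝ (Set.range v))
    (L : ℝ)
    (hL : IsGreatest {d : ℝ | ∃ i k : Fin (j + 1), i ≠ k ∧ d = ‖v i - v k‖} L)
    (R : ℝ) (hR : 0 < R)
    (π : EuclideanSpace ℝ (Fin N) → EuclideanSpace ℝ (Fin N))
    (T : EuclideanSpace ℝ (Fin N) → Submodule ℝ (EuclideanSpace ℝ (Fin N)))
    (hπM : ∀ x ∈ σ, π x ∈ M)
    (hclosest : ∀ x ∈ σ, ‖x - π x‖ = Metric.infDist x M)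
    (horth : ∀ x ∈ σ, ∀ w ∈ T x, (inner ℝ (x - π x) w : ℝ) = 0)
    (hfed : ∀ x ∈ σ, ∀ z ∈ M,
      Metric.infDist (z - π x) (T x : Set (EuclideanSpace ℝ (Fin N))) ≤
        ‖z - π x‖ ^ 2 / (2 * R)) :
    (∀ x ∈ σ, ∀ y ∈ σ,
        Metric.infDist y ((π x + ·) '' (T x : Set (EuclideanSpace ℝ (Fin N)))) ≤
          2 * L ^ 2 / R) ∧
      ∀ x ∈ σ, Metric.infDist x M ≤ 2 * L ^ 2 / R := by
  have hL0 : 0 ≤ L := by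
    obtain ⟨i, k, hik, hLe⟩ := hL.1
    rw [hLe]; positivity
  -- any two points of σ are within L
  have hdiam : ∀ p ∈ σ, ∀ q ∈ σ, dist p q ≤ L := by
    intro p hp q hq
    rw [hσ] at hp hq
    obtain ⟨p', ⟨i, rfl⟩, q', ⟨k, rfl⟩, hle⟩ := convexHull_exists_dist_ge2 hp hq
    refine hle.trans ?_
    rcases eq_or_ne i k with rfl | hik
    · simp [hL0]
    · rw [dist_eq_norm]
      exact hL.2 ⟨i, k, hik, rfl⟩
  -- distance from x ∈ σ to its closest point is at most L
  have hπ_near : ∀ x ∈ σ, ‖x - π x‖ ≤ L := by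
    intro x hx
    rw [hclosest x hx]
    refine (Metric.infDist_le_dist_of_mem (hvM 0)).trans ?_
    exact hdiam x hx (v 0) (hσ ▸ subset_convexHull ℝ _ ⟨0, rfl⟩)
  -- main estimate
  have key : ∀ x ∈ σ, ∀ y ∈ σ,
      Metric.infDist y ((π x + ·) '' (T x : Set (EuclideanSpace ℝ (Fin N)))) ≤
        2 * L ^ 2 / R := by
    intro x hx y hy
    set S : Set (EuclideanSpace ℝ (Fin N)) := (π x + ·) '' (T x) with hS
    have hSconv : Convex ℝ S := ((T x).convex).translate (π x)
    have hSne : S.Nonempty := ⟨π x, 0, (T x).zero_mem, by simp⟩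
    have hconv := convexOn_infDist_aux hSconv hSne
    obtain ⟨z, ⟨i, rfl⟩, hle⟩ :=
      hconv.exists_ge_of_mem_convexHull (Set.subset_univ _) (hσ ▸ hy)
    refine hle.trans ?_
    have hiso : Isometry (fun w => π x + w : EuclideanSpace ℝ (Fin N) → _) :=
      Isometry.of_dist_eq fun a b => by simp [dist_eq_norm]
    have himg : Metric.infDist (v i) S =
        Metric.infDist (v i - π x) ((T x : Set (EuclideanSpace ℝ (Fin N)))) := by
      have : v i = π x + (v i - π x) := by abel
      rw [hS]
      conv_lhs => rw [this]
      exact Metric.infDist_image hiso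
    rw [himg]
    have hviσ : v i ∈ σ := hσ ▸ subset_convexHull ℝ _ ⟨i, rfl⟩
    have hnorm : ‖v i - π x‖ ≤ 2 * L := by
      calc ‖v i - π x‖ ≤ ‖v i - x‖ + ‖x - π x‖ := by
            have : v i - π x = (v i - x) + (x - π x) := by abel
            rw [this]; exact norm_add_le _ _
        _ ≤ L + L := by
            gcongr
            · exact (dist_eq_norm (v i) x) ▸ hdiam (v i) hviσ x hx
            · exact hπ_near x hx
        _ = 2 * L := by ring
    calc Metric.infDist (v i - π x) ((T x : Set (EuclideanSpace ℝ (Fin N)))) ≤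
          ‖v i - π x‖ ^ 2 / (2 * R) := hfed x hx (v i) (hvM i)
      _ ≤ (2 * L) ^ 2 / (2 * R) := by gcongr
      _ = 2 * L ^ 2 / R := by field_simp
  refine ⟨key, fun x hx => ?_⟩
  -- second part
  set S : Set (EuclideanSpace ℝ (Fin N)) := (π x + ·) '' (T x) with hS
  have hSclosed : IsClosed S := by
    have : IsClosed (T x : Set (EuclideanSpace ℝ (Fin N))) :=
      Submodule.closed_of_finiteDimensional (T x)
    exact (Homeomorph.addLeft (π x)).isClosedMap _ this
  have hSne : S.Nonempty := ⟨π x, 0, (T x).zero_mem, by simp⟩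
  obtain ⟨p, hp, hdp⟩ := hSclosed.exists_infDist_eq_dist hSne x
  obtain ⟨t, ht, rfl⟩ := hp
  rcases eq_or_lt_of_le (norm_nonneg (x - π x)) with h0 | h0
  · rw [← hclosest x hx, ← h0]; positivity
  · have hinner : (inner ℝ (x - π x) (x - (π x + t)) : ℝ) = ‖x - π x‖ ^ 2 := by
      have : x - (π x + t) = (x - π x) - t := by abel
      rw [this, inner_sub_right, horth x hx t ht, sub_zero,
        real_inner_self_eq_norm_sq]
    have hcs : ‖x - π x‖ ^ 2 ≤ ‖x - π x‖ * ‖x - (π x + t)‖ := by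
      rw [← hinner]
      exact real_inner_le_norm _ _
    have hle2 : ‖x - π x‖ ≤ ‖x - (π x + t)‖ := by
      have := h0
      nlinarith [hcs]
    rw [← hclosest x hx]
    calc ‖x - π x‖ ≤ ‖x - (π x + t)‖ := hle2
      _ = Metric.infDist x S := by rw [hdp, dist_eq_norm]
      _ ≤ 2 * L ^ 2 / R := key x hx x hx
end

section
/- Simplex–tangent space angle bound: Let M ⊆ EuclideanSpace ℝ (Fin N), let v₀, …, v_j ∈ M be affinely independent points spanning a j-simplex σ with thickness t and longest edge length L, let p = v₀, let R > 0, and let T be a linear subspace of dimension at least j such that infDist (z − p) T ≤ ‖z − p‖²/(2R) for all z ∈ M. Then sin ∠(σ, T) ≤ L/(tR); that is, for every vector u in the direction of the affine span of v₀, …, v_j, infDist u T ≤ (L/(tR))·‖u‖. -/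
open Metric Finset

lemma infDist_submodule_eq {E : Type*} [NormedAddCommGroup E] [InnerProductSpace ℝ E]
    (T : Submodule ℝ E) [T.HasOrthogonalProjection] (x : E) :
    Metric.infDist x (T : Set E) = ‖x - T.orthogonalProjection x‖ := by
  change _ = ‖x - T.starProjection x‖
  rw [Submodule.starProjection_minimal, Metric.infDist_eq_iInf]
  congr 1
  ext w
  rw [dist_eq_norm]

/-- **Simplex–tangent space angle bound.** Let `σ` be a `j`-simplex with vertices on `M`,
thickness `t`, longest edge length `L`, and vertex `p = v 0`. If `T` is a linear subspace
of dimension at least `j` satisfying Federer's tangent estimate at `p` with reach bound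
`R`, then `sin ∠(σ, T) ≤ L/(tR)`. -/
theorem simplex_tangent_space_angle_bound {N j : ℕ} (hj : 1 ≤ j)
    (M : Set (EuclideanSpace ℝ (Fin N)))
    (v : Fin (j + 1) → EuclideanSpace ℝ (Fin N))
    (hv : AffineIndependent ℝ v) (hvM : ∀ i, v i ∈ M)
    (L a t : ℝ)
    (hL : IsGreatest {d : ℝ | ∃ i k : Fin (j + 1), i ≠ k ∧ d = ‖v i - v k‖} L)
    (ha : IsLeast {d : ℝ | ∃ i : Fin (j + 1),
      d = Metric.infDist (v i) (affineSpan ℝ (v '' {i}ᶜ) : Set (EuclideanSpace ℝ (Fin N)))} a)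
    (ht : t = a / (j * L))
    (R : ℝ) (hR : 0 < R)
    (T : Submodule ℝ (EuclideanSpace ℝ (Fin N)))
    (hdim : j ≤ Module.finrank ℝ T)
    (hfed : ∀ z ∈ M, Metric.infDist (z - v 0) (T : Set (EuclideanSpace ℝ (Fin N))) ≤
      ‖z - v 0‖ ^ 2 / (2 * R)) :
    ∀ u ∈ (affineSpan ℝ (Set.range v)).direction,
      Metric.infDist u (T : Set (EuclideanSpace ℝ (Fin N))) ≤ (L / (t * R)) * ‖u‖ := by
  intro u hu
  classical
  -- L > 0
  obtain ⟨i₁, k₁, hik, hLval⟩ := hL.1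
  have hL0 : 0 < L := by
    rw [hLval, norm_pos_iff, sub_ne_zero]
    exact fun h => hik (hv.injective h)
  -- a > 0
  obtain ⟨i₀, hai₀⟩ := ha.1
  have ha0 : 0 < a := by
    rw [hai₀]
    have hnm : v i₀ ∉ (affineSpan ℝ (v '' {i₀}ᶜ) : Set (EuclideanSpace ℝ (Fin N))) := by
      have := hv.notMem_affineSpan_diff i₀ Set.univ
      simpa [Set.compl_eq_univ_diff] using this
    have hcl : IsClosed (affineSpan ℝ (v '' {i₀}ᶜ) : Set (EuclideanSpace ℝ (Fin N))) :=
      AffineSubspace.closed_of_finiteDimensional _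
    have hne : ((affineSpan ℝ (v '' {i₀}ᶜ) : Set (EuclideanSpace ℝ (Fin N)))).Nonempty := by
      haveI : Nontrivial (Fin (j+1)) := ⟨⟨⟨0, by omega⟩, ⟨1, by omega⟩, Fin.ne_of_val_ne (by simp)⟩⟩
      obtain ⟨k, hk⟩ := exists_ne i₀
      exact ⟨v k, subset_affineSpan ℝ _ ⟨k, hk, rfl⟩⟩
    exact (hcl.notMem_iff_infDist_pos hne).mp hnm
  -- decompose u
  have h0 : u ∈ vectorSpan ℝ (Set.range v) := by
    rwa [direction_affineSpan] at hu
  rw [vectorSpan_range_eq_span_range_vsub_right ℝ v 0] at h0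
  obtain ⟨c, hc⟩ := (Submodule.mem_span_range_iff_exists_fun ℝ).mp h0
  simp only [vsub_eq_sub] at hc
  -- coefficient bound
  have hcoef : ∀ i : Fin (j+1), i ≠ 0 → |c i| * a ≤ ‖u‖ := by
    intro i hi
    by_cases hci : c i = 0
    · simp only [hci, abs_zero, zero_mul]; positivity
    · set S := affineSpan ℝ (v '' {i}ᶜ) with hS
      have haS : a ≤ Metric.infDist (v i) (S : Set (EuclideanSpace ℝ (Fin N))) := ha.2 ⟨i, rfl⟩
      set w0 : EuclideanSpace ℝ (Fin N) := ∑ k ∈ univ.erase i, c k • (v k - v 0) with hw0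
      have hmem : ∀ k ∈ univ.erase i, c k • (v k - v 0) ∈ S.direction := by
        intro k hk
        have hk' : k ≠ i := (Finset.mem_erase.mp hk).1
        have h0S : v 0 ∈ S := subset_affineSpan ℝ _ ⟨0, Ne.symm hi, rfl⟩
        have hkS : v k ∈ S := subset_affineSpan ℝ _ ⟨k, hk', rfl⟩
        exact S.direction.smul_mem _ (AffineSubspace.vsub_mem_direction hkS h0S)
      have hw0d : w0 ∈ S.direction := Submodule.sum_mem _ hmem
      have hq : ((-(c i)⁻¹) • w0) +ᵥ v 0 ∈ S := by
        refine AffineSubspace.vadd_mem_of_mem_direction (S.direction.smul_mem _ hw0d)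
          (subset_affineSpan ℝ _ ⟨0, Ne.symm hi, rfl⟩)
      have hsplit : u = c i • (v i - v 0) + w0 := by
        rw [hw0, ← hc, ← Finset.add_sum_erase _ _ (Finset.mem_univ i)]
      have hdist : Metric.infDist (v i) (S : Set (EuclideanSpace ℝ (Fin N))) ≤
          |c i|⁻¹ * ‖u‖ := by
        refine le_trans (Metric.infDist_le_dist_of_mem hq) ?_
        rw [dist_eq_norm]
        have : v i - (((-(c i)⁻¹) • w0) +ᵥ v 0) = (c i)⁻¹ • u := by
          rw [hsplit]
          simp only [vadd_eq_add, smul_add, smul_smul]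
          rw [inv_mul_cancel₀ hci]
          module
        rw [this, norm_smul, norm_inv, Real.norm_eq_abs]
      have h1 : a ≤ |c i|⁻¹ * ‖u‖ := le_trans haS hdist
      have h2 : |c i| * a ≤ |c i| * (|c i|⁻¹ * ‖u‖) :=
        mul_le_mul_of_nonneg_left h1 (abs_nonneg _)
      rwa [← mul_assoc, mul_inv_cancel₀ (abs_ne_zero.mpr hci), one_mul] at h2
  -- edge-length and Federer bounds
  have hedge : ∀ i : Fin (j+1), ‖v i - v 0‖ ≤ L := by
    intro i
    by_cases hi : i = 0
    · simpa [hi] using hL0.le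
    · exact hL.2 ⟨i, 0, hi, rfl⟩
  have hfedi : ∀ i : Fin (j+1),
      Metric.infDist (v i - v 0) (T : Set (EuclideanSpace ℝ (Fin N))) ≤ L ^ 2 / (2 * R) := by
    intro i
    refine le_trans (hfed (v i) (hvM i)) ?_
    gcongr
    exact hedge i
  -- orthogonal projection decomposition
  have hQ : ∀ x, Metric.infDist x (T : Set (EuclideanSpace ℝ (Fin N)))
      = ‖x - (T.orthogonalProjection x : EuclideanSpace ℝ (Fin N))‖ :=
    fun x => infDist_submodule_eq T x
  rw [hQ u]
  have hsum : u - ((T.orthogonalProjection u : T) : EuclideanSpace ℝ (Fin N))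
      = ∑ i, c i • ((v i - v 0) -
        ((T.orthogonalProjection (v i - v 0) : T) : EuclideanSpace ℝ (Fin N))) := by
    rw [← hc, map_sum]
    simp only [Submodule.coe_sum]
    rw [← Finset.sum_sub_distrib]
    refine Finset.sum_congr rfl fun i _ => ?_
    rw [map_smul, Submodule.coe_smul]
    module
  rw [hsum]
  have hcard : (univ.erase (0 : Fin (j+1))).card = j := by
    rw [Finset.card_erase_of_mem (Finset.mem_univ _), Finset.card_univ]
    simp
  have hj0 : (0:ℝ) < j := by exact_mod_cast hj
  calc ‖∑ i, c i • ((v i - v 0) -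
        ((T.orthogonalProjection (v i - v 0) : T) : EuclideanSpace ℝ (Fin N)))‖
      ≤ ∑ i, ‖c i • ((v i - v 0) -
        ((T.orthogonalProjection (v i - v 0) : T) : EuclideanSpace ℝ (Fin N)))‖ :=
        norm_sum_le _ _
    _ = ∑ i ∈ univ.erase 0, ‖c i • ((v i - v 0) -
        ((T.orthogonalProjection (v i - v 0) : T) : EuclideanSpace ℝ (Fin N)))‖ :=
        (Finset.sum_erase _ (by simp)).symm
    _ ≤ ∑ _i ∈ univ.erase (0 : Fin (j+1)), (‖u‖ / a) * (L ^ 2 / (2 * R)) := by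
        apply Finset.sum_le_sum
        intro i hi
        have hi0 := (Finset.mem_erase.mp hi).1
        rw [norm_smul, Real.norm_eq_abs]
        have h1 : |c i| ≤ ‖u‖ / a := (le_div_iff₀ ha0).mpr (hcoef i hi0)
        have h2 : ‖(v i - v 0) -
            ((T.orthogonalProjection (v i - v 0) : T) : EuclideanSpace ℝ (Fin N))‖
            ≤ L ^ 2 / (2 * R) := by
          rw [← hQ]; exact hfedi i
        exact mul_le_mul h1 h2 (norm_nonneg _) (by positivity)
    _ = j * ((‖u‖ / a) * (L ^ 2 / (2 * R))) := by
        rw [Finset.sum_const, hcard, nsmul_eq_mul]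
    _ ≤ L / (t * R) * ‖u‖ := by
        rw [ht]
        have hL' : L ≠ 0 := ne_of_gt hL0
        have ha' : a ≠ 0 := ne_of_gt ha0
        have hR' : R ≠ 0 := ne_of_gt hR
        have hj' : (j:ℝ) ≠ 0 := ne_of_gt hj0
        have hlhs : (j:ℝ) * ((‖u‖ / a) * (L ^ 2 / (2 * R)))
            = (j * L ^ 2 * ‖u‖) / (a * R) / 2 := by
          field_simp
        have hkey : L / (a / (j * L) * R) = j * L ^ 2 / (a * R) := by
          field_simp
        have hrhs : L / (a / (j * L) * R) * ‖u‖ = (j * L ^ 2 * ‖u‖) / (a * R) := by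
          rw [hkey, div_mul_eq_mul_div]
        rw [hlhs, hrhs]
        have hpos : 0 ≤ (j * L ^ 2 * ‖u‖) / (a * R) := by positivity
        linarith
end

section
/- Distortion of the coordinate projection onto a tangent space: Let M ⊆ E := EuclideanSpace ℝ (Fin N), let p ∈ M, let R > 0 and 0 < ρ < 1/2, and set U = M ∩ (open ball of radius ρR centred at p). Suppose for each x ∈ U we are given a linear subspace T(x) of E such that: for all z ∈ M, infDist (z − x) (T(x)) ≤ ‖z − x‖²/(2R) (local reach at least R); and for every u ∈ T(x), infDist u (T(p)) ≤ (‖x − p‖/R)·‖u‖ (tangent space variation). Let P be the orthogonal projection of E onto T(p). Then P restricted to U is a 4ρ²-distortion map: for all x, y ∈ U, |‖P y − P x‖ − ‖y − x‖| ≤ 4ρ²·‖y − x‖. -/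

lemma proj_infDist {N : ℕ} (K : Submodule ℝ (EuclideanSpace ℝ (Fin N)))
    (v : EuclideanSpace ℝ (Fin N)) :
    ‖v - (Submodule.orthogonalProjectionOnto K v : EuclideanSpace ℝ (Fin N))‖ =
      Metric.infDist v (K : Set (EuclideanSpace ℝ (Fin N))) := by
  rw [Metric.infDist_eq_iInf, ← Submodule.starProjection_apply, Submodule.starProjection_minimal]
  simp_rw [dist_eq_norm]; rfl


set_option maxHeartbeats 1000000 in
/-- **Distortion of the coordinate projection onto a tangent space.** Let `M ⊆ ℝᴺ`,
`p ∈ M`, `0 < ρ < 1/2`, and `U = M ∩ B(p, ρR)`. If each `x ∈ U` carries a tangent space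
`T x` satisfying Federer's tangent estimate with reach bound `R` and the tangent variation
bound `sin ∠(T x, T p) ≤ ‖x - p‖/R`, then the orthogonal projection onto `T p` restricted
to `U` is a `4ρ²`-distortion map. -/
theorem coordinate_projection_distortion {N : ℕ}
    (M : Set (EuclideanSpace ℝ (Fin N)))
    (p : EuclideanSpace ℝ (Fin N)) (hp : p ∈ M)
    (R ρ : ℝ) (hR : 0 < R) (hρ0 : 0 < ρ) (hρ : ρ < 1 / 2)
    (U : Set (EuclideanSpace ℝ (Fin N)))
    (hU : U = M ∩ Metric.ball p (ρ * R))
    (T : EuclideanSpace ℝ (Fin N) → Submodule ℝ (EuclideanSpace ℝ (Fin N)))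
    (hfed : ∀ x ∈ U, ∀ z ∈ M,
      Metric.infDist (z - x) (T x : Set (EuclideanSpace ℝ (Fin N))) ≤
        ‖z - x‖ ^ 2 / (2 * R))
    (hvar : ∀ x ∈ U, ∀ u ∈ T x,
      Metric.infDist u (T p : Set (EuclideanSpace ℝ (Fin N))) ≤ (‖x - p‖ / R) * ‖u‖) :
    ∀ x ∈ U, ∀ y ∈ U,
      |‖(Submodule.orthogonalProjectionOnto (T p) y : EuclideanSpace ℝ (Fin N)) -
          (Submodule.orthogonalProjectionOnto (T p) x : EuclideanSpace ℝ (Fin N))‖ - ‖y - x‖| ≤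
        4 * ρ ^ 2 * ‖y - x‖ := by
  intro x hx y hy
  set v : EuclideanSpace ℝ (Fin N) := y - x with hv
  have hproj : (Submodule.orthogonalProjectionOnto (T p) y : EuclideanSpace ℝ (Fin N)) - (Submodule.orthogonalProjectionOnto (T p) x : EuclideanSpace ℝ (Fin N)) =
      (Submodule.orthogonalProjectionOnto (T p) v : EuclideanSpace ℝ (Fin N)) := by
    rw [hv, map_sub]; rfl
  rw [hproj]
  rcases eq_or_ne v 0 with h0 | h0
  · simp [h0]
  have hvpos : 0 < ‖v‖ := norm_pos_iff.mpr h0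
  set Pv : EuclideanSpace ℝ (Fin N) := (Submodule.orthogonalProjectionOnto (T p) v : EuclideanSpace ℝ (Fin N)) with hPv
  -- Pythagoras
  have hmem : v - Pv ∈ (T p)ᗮ := by
    have := Submodule.sub_starProjection_mem_orthogonal (K := T p) v; rwa [Submodule.starProjection_apply] at this
  have hinner : inner ℝ (Pv : EuclideanSpace ℝ (Fin N)) (v - Pv) = (0 : ℝ) :=
    hmem Pv (Submodule.orthogonalProjectionOnto (T p) v).2
  have hpyth : ‖v‖ ^ 2 = ‖Pv‖ ^ 2 + ‖v - Pv‖ ^ 2 := by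
    have := norm_add_sq_real (Pv) (v - Pv)
    simp only [add_sub_cancel, hinner, mul_zero, add_zero] at this
    linarith
  -- membership facts
  have hxM : x ∈ M := (hU ▸ hx).1
  have hyM : y ∈ M := (hU ▸ hy).1
  have hxball : ‖x - p‖ < ρ * R := by
    have := (hU ▸ hx).2; rwa [Metric.mem_ball, dist_eq_norm] at this
  have hyball : ‖y - p‖ < ρ * R := by
    have := (hU ▸ hy).2; rwa [Metric.mem_ball, dist_eq_norm] at this
  -- the key estimate : infDist v (T p) ≤ 2ρ‖v‖
  have hkey : Metric.infDist v (T p : Set (EuclideanSpace ℝ (Fin N))) ≤ 2 * ρ * ‖v‖ := by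
    rcases le_or_gt ‖v‖ (ρ * R) with hc | hc
    · -- small ‖v‖ : use Federer at x and variation
      set w : EuclideanSpace ℝ (Fin N) := (Submodule.orthogonalProjectionOnto (T x) v : EuclideanSpace ℝ (Fin N)) with hw
      have hw1 : ‖v - w‖ ≤ ‖v‖ ^ 2 / (2 * R) := by
        rw [hw, proj_infDist]; exact hfed x hx y hyM
      have hw2 : w ∈ T x := (Submodule.orthogonalProjectionOnto (T x) v).2
      set w' : EuclideanSpace ℝ (Fin N) := (Submodule.orthogonalProjectionOnto (T p) w : EuclideanSpace ℝ (Fin N)) with hw'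
      have hw3 : ‖w - w'‖ ≤ (‖x - p‖ / R) * ‖w‖ := by
        rw [hw', proj_infDist]; exact hvar x hx w hw2
      have hle : Metric.infDist v (T p : Set (EuclideanSpace ℝ (Fin N))) ≤ ‖v - w‖ + ‖w - w'‖ := by
        refine le_trans (Metric.infDist_le_dist_of_mem
          (Submodule.orthogonalProjectionOnto (T p) w).2) ?_
        rw [dist_eq_norm]
        calc ‖v - w'‖ = ‖(v - w) + (w - w')‖ := by abel_nf
          _ ≤ ‖v - w‖ + ‖w - w'‖ := norm_add_le _ _
      have hwnorm : ‖w‖ ≤ ‖v‖ + ‖v - w‖ := by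
        calc ‖w‖ = ‖v - (v - w)‖ := by rw [sub_sub_cancel]
          _ ≤ ‖v‖ + ‖v - w‖ := norm_sub_le _ _
      have h1 : ‖v - w‖ ≤ ρ * ‖v‖ / 2 := by
        refine hw1.trans ?_
        rw [div_le_iff₀ (by positivity)]
        nlinarith [sq_nonneg ‖v‖]
      have h2 : ‖x - p‖ / R ≤ ρ := by
        rw [div_le_iff₀ hR]; linarith
      have hwn : 0 ≤ ‖w‖ := norm_nonneg _
      have h3 : (‖x - p‖ / R) * ‖w‖ ≤ ρ * ‖w‖ := mul_le_mul_of_nonneg_right h2 hwn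
      have h4 : ρ * ‖w‖ ≤ ρ * (‖v‖ + ‖v - w‖) := mul_le_mul_of_nonneg_left hwnorm hρ0.le
      have h5 : ρ * ‖v - w‖ ≤ ρ * (ρ * ‖v‖ / 2) := mul_le_mul_of_nonneg_left h1 hρ0.le
      have h6 : ρ * (ρ * ‖v‖ / 2) ≤ ρ * ‖v‖ / 2 := by nlinarith [mul_nonneg hρ0.le hvpos.le]
      linarith
    · -- large ‖v‖ : use Federer at p for both x and y
      have hpU : p ∈ U := by
        rw [hU]
        exact ⟨hp, Metric.mem_ball_self (by positivity)⟩
      set a' : EuclideanSpace ℝ (Fin N) := (Submodule.orthogonalProjectionOnto (T p) (y - p) : EuclideanSpace ℝ (Fin N)) with ha'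
      set b' : EuclideanSpace ℝ (Fin N) := (Submodule.orthogonalProjectionOnto (T p) (x - p) : EuclideanSpace ℝ (Fin N)) with hb'
      have ha1 : ‖(y - p) - a'‖ ≤ ‖y - p‖ ^ 2 / (2 * R) := by
        rw [ha', proj_infDist]; exact hfed p hpU y hyM
      have hb1 : ‖(x - p) - b'‖ ≤ ‖x - p‖ ^ 2 / (2 * R) := by
        rw [hb', proj_infDist]; exact hfed p hpU x hxM
      have hmem' : a' - b' ∈ T p :=
        Submodule.sub_mem _ (Submodule.orthogonalProjectionOnto (T p) (y - p)).2
          (Submodule.orthogonalProjectionOnto (T p) (x - p)).2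
      have hle : Metric.infDist v (T p : Set (EuclideanSpace ℝ (Fin N))) ≤
          ‖(y - p) - a'‖ + ‖(x - p) - b'‖ := by
        refine le_trans (Metric.infDist_le_dist_of_mem hmem') ?_
        rw [dist_eq_norm]
        have hid : v - (a' - b') = ((y - p) - a') - ((x - p) - b') := by
          rw [hv]; abel
        calc ‖v - (a' - b')‖ = ‖((y - p) - a') - ((x - p) - b')‖ := by rw [hid]
          _ ≤ ‖(y - p) - a'‖ + ‖(x - p) - b'‖ := norm_sub_le _ _
      have hy2 : ‖y - p‖ ^ 2 / (2 * R) ≤ ρ ^ 2 * R / 2 := by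
        rw [div_le_iff₀ (by positivity)]
        nlinarith [norm_nonneg (y - p)]
      have hx2 : ‖x - p‖ ^ 2 / (2 * R) ≤ ρ ^ 2 * R / 2 := by
        rw [div_le_iff₀ (by positivity)]
        nlinarith [norm_nonneg (x - p)]
      have : Metric.infDist v (T p : Set (EuclideanSpace ℝ (Fin N))) ≤ ρ ^ 2 * R := by linarith
      refine this.trans ?_
      nlinarith
  -- finish
  have hd : ‖v - Pv‖ ≤ 2 * ρ * ‖v‖ := by rw [proj_infDist]; exact hkey
  have hPle : ‖Pv‖ ≤ ‖v‖ := by nlinarith [sq_nonneg ‖v - Pv‖, norm_nonneg Pv, norm_nonneg v]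
  rw [abs_of_nonpos (by linarith)]
  have hPn : 0 ≤ ‖Pv‖ := norm_nonneg _
  have hdn : 0 ≤ ‖v - Pv‖ := norm_nonneg _
  nlinarith [sq_nonneg (‖v‖ - ‖Pv‖), mul_le_mul hd hd hdn (by positivity : (0:ℝ) ≤ 2 * ρ * ‖v‖)]
end

section
/- Simplexwise distortion of orthogonal projection onto a tangent space: Let M ⊆ EuclideanSpace ℝ (Fin N), let v₀, …, v_j ∈ M be affinely independent points spanning a j-simplex σ with thickness t and longest edge length L, let p = v₀, let R > 0, and let T be a linear subspace of dimension at least j such that infDist (z − p) T ≤ ‖z − p‖²/(2R) for all z ∈ M. If L < tR, then the orthogonal projection P onto T restricted to σ is a ξ-distortion map with ξ = (L/(tR))²: for all x, y ∈ σ, |‖P y − P x‖ − ‖y − x‖| ≤ (L/(tR))²·‖y − x‖. -/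
open Finset

section Aux

variable {E : Type*} [NormedAddCommGroup E] [InnerProductSpace ℝ E]

lemma aux_proj_le_infDist (T : Submodule ℝ E) [T.HasOrthogonalProjection] (w : E) :
    ‖w - (T.orthogonalProjectionOnto w : E)‖ ≤ Metric.infDist w (T : Set E) := by
  rw [Metric.infDist_eq_iInf, ← Submodule.starProjection_apply, Submodule.starProjection_minimal]
  simp only [dist_eq_norm]
  exact le_refl _

lemma aux_pyth (T : Submodule ℝ E) [T.HasOrthogonalProjection] (u : E) :
    ‖u‖ ^ 2 = ‖(T.orthogonalProjectionOnto u : E)‖ ^ 2 + ‖u - (T.orthogonalProjectionOnto u : E)‖ ^ 2 := by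
  have h0 : inner (𝕜 := ℝ) (T.orthogonalProjectionOnto u : E)
      (u - (T.orthogonalProjectionOnto u : E)) = 0 := by
    rw [real_inner_comm]
    have := Submodule.sub_starProjection_mem_orthogonal (K := T) u
    exact (Submodule.mem_orthogonal' T _).mp this _ (T.orthogonalProjectionOnto u).2
  calc ‖u‖ ^ 2 = ‖(T.orthogonalProjectionOnto u : E) + (u - (T.orthogonalProjectionOnto u : E))‖ ^ 2 := by
        rw [add_sub_cancel]
    _ = _ := by rw [norm_add_sq_real, h0]; ring

/-- coefficient bound via altitude -/
lemma aux_coeff {n : ℕ} (v : Fin n → E) (e : Fin n → ℝ) (hsum : ∑ k, e k = 0)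
    (i : Fin n) (hei : e i ≠ 0) :
    Metric.infDist (v i) (affineSpan ℝ (v '' {i}ᶜ) : Set E) ≤ ‖∑ k, e k • v k‖ / |e i| := by
  classical
  set u : E := ∑ k, e k • v k with hu
  set q : E := v i - (e i)⁻¹ • u with hq
  have himg : v '' ({i}ᶜ : Set (Fin n)) = Set.range (fun x : ({i}ᶜ : Set (Fin n)) => v x) :=
    Set.image_eq_range _ _
  have h1 : ∑ x : ({i}ᶜ : Set (Fin n)), e (x : Fin n) = ∑ k ∈ univ.erase i, e k := by
    rw [eq_comm]
    apply Finset.sum_subtype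
    intro x; simp [Set.mem_compl_iff]
  have h2 : ∑ k ∈ univ.erase i, e k = -(e i) := by
    have h := Finset.add_sum_erase univ e (mem_univ i)
    rw [hsum] at h; linarith
  have hmem : q ∈ (affineSpan ℝ (v '' {i}ᶜ) : Set E) := by
    rw [himg, SetLike.mem_coe]
    have hW : ∑ x : ({i}ᶜ : Set (Fin n)), (-(e (x : Fin n)) / (e i)) = 1 := by
      rw [← Finset.sum_div, Finset.sum_neg_distrib, h1, h2, neg_neg, div_self hei]
    have hA := affineCombination_mem_affineSpan (k := ℝ) hW (fun x : ({i}ᶜ : Set (Fin n)) => v x)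
    convert hA using 1
    rw [Finset.univ.affineCombination_eq_linear_combination _ _ hW]
    have hsub : ∑ x : ({i}ᶜ : Set (Fin n)), e (x : Fin n) • v (x : Fin n)
        = ∑ k ∈ univ.erase i, e k • v k := by
      rw [eq_comm]; apply Finset.sum_subtype; intro x; simp [Set.mem_compl_iff]
    have h3 : ∑ k ∈ univ.erase i, e k • v k = u - e i • v i := by
      have h := Finset.add_sum_erase univ (fun k => e k • v k) (mem_univ i)
      rw [← hu] at h
      exact eq_sub_of_add_eq' h
    calc q = (-(e i)⁻¹) • (u - e i • v i) + (1 - (e i)⁻¹ * e i) • v i := by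
          rw [hq]; module
      _ = ∑ x : ({i}ᶜ : Set (Fin n)), (-(e (x : Fin n)) / (e i)) • v (x : Fin n) := by
          rw [inv_mul_cancel₀ hei, sub_self, zero_smul, add_zero, ← h3, ← hsub,
            Finset.smul_sum]
          apply Finset.sum_congr rfl
          intro x _
          rw [smul_smul]
          congr 1
          field_simp
  refine (Metric.infDist_le_dist_of_mem hmem).trans ?_
  rw [dist_eq_norm, hq, show v i - (v i - (e i)⁻¹ • u) = (e i)⁻¹ • u by abel, norm_smul,
    norm_inv, Real.norm_eq_abs, div_eq_inv_mul]

lemma aux_repr {n : ℕ} {v : Fin n → E} {x : E} (hx : x ∈ convexHull ℝ (Set.range v)) :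
    ∃ c : Fin n → ℝ, ∑ i, c i = 1 ∧ ∑ i, c i • v i = x := by
  classical
  rw [convexHull_range_eq_exists_affineCombination] at hx
  obtain ⟨s, w, -, h1, hxc⟩ := hx
  refine ⟨fun i => if i ∈ s then w i else 0, ?_, ?_⟩
  · rw [Finset.sum_ite_mem, Finset.univ_inter, h1]
  · rw [← hxc, s.affineCombination_eq_linear_combination v w h1]
    simp only [ite_smul, zero_smul]
    rw [Finset.sum_ite_mem, Finset.univ_inter]

end Aux

set_option maxHeartbeats 1000000 in
/-- **Simplexwise distortion of orthogonal projection onto a tangent space.** Let `σ` be a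
`j`-simplex with vertices on `M`, thickness `t`, longest edge length `L`, and vertex
`p = v 0`. If `T` is a linear subspace of dimension at least `j` satisfying Federer's
tangent estimate at `p` with reach bound `R`, and `L < tR`, then the orthogonal projection
onto `T` restricted to `σ` is a `(L/(tR))²`-distortion map. -/
theorem orthogonal_projection_simplexwise_distortion {N j : ℕ} (hj : 1 ≤ j)
    (M : Set (EuclideanSpace ℝ (Fin N)))
    (v : Fin (j + 1) → EuclideanSpace ℝ (Fin N))
    (hv : AffineIndependent ℝ v) (hvM : ∀ i, v i ∈ M)
    (σ : Set (EuclideanSpace ℝ (Fin N)))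
    (hσ : σ = convexHull ℝ (Set.range v))
    (L a t : ℝ)
    (hL : IsGreatest {d : ℝ | ∃ i k : Fin (j + 1), i ≠ k ∧ d = ‖v i - v k‖} L)
    (ha : IsLeast {d : ℝ | ∃ i : Fin (j + 1),
      d = Metric.infDist (v i) (affineSpan ℝ (v '' {i}ᶜ) : Set (EuclideanSpace ℝ (Fin N)))} a)
    (ht : t = a / (j * L))
    (R : ℝ) (hR : 0 < R)
    (T : Submodule ℝ (EuclideanSpace ℝ (Fin N)))
    (hdim : j ≤ Module.finrank ℝ T)
    (hfed : ∀ z ∈ M, Metric.infDist (z - v 0) (T : Set (EuclideanSpace ℝ (Fin N))) ≤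
      ‖z - v 0‖ ^ 2 / (2 * R))
    (hLtR : L < t * R) :
    ∀ x ∈ σ, ∀ y ∈ σ,
      |‖(T.orthogonalProjectionOnto y : EuclideanSpace ℝ (Fin N)) -
          (T.orthogonalProjectionOnto x : EuclideanSpace ℝ (Fin N))‖ - ‖y - x‖| ≤
        (L / (t * R)) ^ 2 * ‖y - x‖ := by
  classical
  intro x hx y hy
  rw [hσ] at hx hy
  obtain ⟨c, hc1, hcx⟩ := aux_repr hx
  obtain ⟨d, hd1, hdy⟩ := aux_repr hy
  set e : Fin (j + 1) → ℝ := fun i => d i - c i with he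
  have hesum : ∑ i, e i = 0 := by
    simp only [he, Finset.sum_sub_distrib, hc1, hd1, sub_self]
  set u : EuclideanSpace ℝ (Fin N) := y - x with hu
  have huev : u = ∑ i, e i • v i := by
    rw [hu, ← hcx, ← hdy, ← Finset.sum_sub_distrib]
    apply Finset.sum_congr rfl
    intro i _
    rw [he, sub_smul]
  -- positivity facts
  have hLpos : 0 < L := by
    obtain ⟨i0, k0, hik, hLe⟩ := hL.1
    rw [hLe]
    exact norm_pos_iff.mpr (sub_ne_zero.mpr (hv.injective.ne hik))
  have htR : 0 < t * R := hLpos.trans hLtR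
  have ht0 : 0 < t := by
    rcases lt_trichotomy t 0 with h | h | h
    · nlinarith
    · nlinarith
    · exact h
  have hjR : (1 : ℝ) ≤ (j : ℝ) := by exact_mod_cast hj
  have hjL : (0 : ℝ) < j * L := by nlinarith
  have ha' : a = t * (j * L) := by
    rw [ht, div_mul_cancel₀ _ (ne_of_gt hjL)]
  have ha0 : 0 < a := by rw [ha']; positivity
  -- coefficient bound
  have hcoeff : ∀ i : Fin (j + 1), |e i| ≤ ‖u‖ / a := by
    intro i
    by_cases hei : e i = 0
    · rw [hei, abs_zero]
      positivity
    · have h1 := aux_coeff v e hesum i hei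
      rw [← huev] at h1
      have h2 : a ≤ ‖u‖ / |e i| := le_trans (ha.2 ⟨i, rfl⟩) h1
      have h3 : 0 < |e i| := abs_pos.mpr hei
      rw [le_div_iff₀ h3] at h2
      rw [le_div_iff₀ ha0]
      linarith [h2, mul_comm a |e i|]
  -- the projection as a linear map
  set f : EuclideanSpace ℝ (Fin N) →ₗ[ℝ] EuclideanSpace ℝ (Fin N) :=
    T.subtype.comp (T.orthogonalProjectionOnto).toLinearMap with hf
  have hfz : ∀ z : EuclideanSpace ℝ (Fin N), f z = (T.orthogonalProjectionOnto z : _) := fun z => rfl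
  -- edge vector bounds
  have hedge : ∀ i : Fin (j + 1), i ≠ 0 → ‖(v i - v 0) - f (v i - v 0)‖ ≤ L ^ 2 / (2 * R) := by
    intro i hi
    rw [hfz]
    refine le_trans (aux_proj_le_infDist T (v i - v 0)) ?_
    refine le_trans (hfed (v i) (hvM i)) ?_
    have h1 : ‖v i - v 0‖ ≤ L := hL.2 ⟨i, 0, hi, rfl⟩
    have h2 : (0:ℝ) ≤ ‖v i - v 0‖ := norm_nonneg _
    apply div_le_div_of_nonneg_right ?_ (by positivity)
    · nlinarith
  -- expansion of u in edge vectors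
  have huw : u = ∑ i, e i • (v i - v 0) := by
    rw [huev]
    simp only [smul_sub, Finset.sum_sub_distrib, ← Finset.sum_smul, hesum, zero_smul, sub_zero]
  -- key bound on ‖u - f u‖
  have hkey : ‖u - f u‖ ≤ L / (2 * t * R) * ‖u‖ := by
    have hlin : u - f u = ∑ i, e i • ((v i - v 0) - f (v i - v 0)) := by
      rw [huw, map_sum, ← Finset.sum_sub_distrib]
      apply Finset.sum_congr rfl
      intro i _
      rw [map_smul]
      module
    have hB : ∀ i : Fin (j + 1),
        ‖e i • ((v i - v 0) - f (v i - v 0))‖ ≤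
          if i = 0 then 0 else ‖u‖ / a * (L ^ 2 / (2 * R)) := by
      intro i
      by_cases hi : i = 0
      · subst hi
        simp [sub_self]
      · rw [if_neg hi, norm_smul, Real.norm_eq_abs]
        have h1 := hcoeff i
        have h2 := hedge i hi
        have h3 : (0:ℝ) ≤ |e i| := abs_nonneg _
        have h4 : (0:ℝ) ≤ ‖(v i - v 0) - f (v i - v 0)‖ := norm_nonneg _
        have h5 : (0:ℝ) ≤ ‖u‖ / a := le_trans h3 h1
        exact mul_le_mul h1 h2 h4 h5
    have hs : ∑ i : Fin (j + 1), (if i = 0 then (0:ℝ) else ‖u‖ / a * (L ^ 2 / (2 * R)))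
        = j * (‖u‖ / a * (L ^ 2 / (2 * R))) := by
      set B : ℝ := ‖u‖ / a * (L ^ 2 / (2 * R)) with hBdef
      have h1 := Finset.add_sum_erase univ (fun i : Fin (j + 1) => if i = 0 then (0:ℝ) else B)
        (mem_univ 0)
      have h2 : ∑ i ∈ univ.erase (0 : Fin (j + 1)), (if i = 0 then (0:ℝ) else B)
          = ∑ _i ∈ univ.erase (0 : Fin (j + 1)), B := by
        apply Finset.sum_congr rfl
        intro i hi
        rw [if_neg (Finset.ne_of_mem_erase hi)]
      rw [← h1]
      beta_reduce
      rw [if_pos rfl, zero_add, h2, Finset.sum_const, Finset.card_erase_of_mem (mem_univ 0),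
        Finset.card_univ, Fintype.card_fin, Nat.add_sub_cancel, nsmul_eq_mul]
    calc ‖u - f u‖ ≤ ∑ i, ‖e i • ((v i - v 0) - f (v i - v 0))‖ := by
          rw [hlin]; exact norm_sum_le _ _
      _ ≤ ∑ i : Fin (j + 1), (if i = 0 then (0:ℝ) else ‖u‖ / a * (L ^ 2 / (2 * R))) :=
          Finset.sum_le_sum fun i _ => hB i
      _ = j * (‖u‖ / a * (L ^ 2 / (2 * R))) := hs
      _ = L / (2 * t * R) * ‖u‖ := by
          rw [ha']
          field_simp
  -- conclude via Pythagoras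
  have hpy : ‖u‖ ^ 2 = ‖f u‖ ^ 2 + ‖u - f u‖ ^ 2 := by
    rw [hfz u]; exact aux_pyth T u
  have hgoal : (T.orthogonalProjectionOnto y : EuclideanSpace ℝ (Fin N)) -
      (T.orthogonalProjectionOnto x : EuclideanSpace ℝ (Fin N)) = f u := by
    have hms : f (y - x) = f y - f x := map_sub f y x
    rw [hu, hms, hfz y, hfz x]
  rw [hgoal, show ‖y - x‖ = ‖u‖ from rfl]
  have hfu : ‖f u‖ ≤ ‖u‖ := by nlinarith [norm_nonneg (f u), norm_nonneg u, sq_nonneg ‖u - f u‖]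
  rw [abs_of_nonpos (by linarith), neg_sub]
  by_cases hn : ‖u‖ = 0
  · have : ‖u - f u‖ ≤ 0 := by rw [hn] at hkey; linarith [hkey]
    nlinarith [norm_nonneg (f u), norm_nonneg (u - f u)]
  · have hn0 : 0 < ‖u‖ := lt_of_le_of_ne (norm_nonneg u) (Ne.symm hn)
    have h6 : ‖u - f u‖ ^ 2 ≤ (L / (2 * t * R)) ^ 2 * ‖u‖ ^ 2 := by
      nlinarith [norm_nonneg (u - f u)]
    have h7 : (L / (2 * t * R)) ^ 2 ≤ (L / (t * R)) ^ 2 := by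
      rw [div_pow, div_pow]
      apply div_le_div_of_nonneg_left (by positivity) (by positivity)
      nlinarith
    nlinarith [norm_nonneg (f u)]
end

section
/- Upper bound for the distortion of the closest-point projection: Let x, y, x̌, y̌ be points of EuclideanSpace ℝ (Fin N) and let 0 ≤ a < R. Suppose ‖x − x̌‖ ≤ a and ‖y − y̌‖ ≤ a, and suppose the inner-product bounds |⟪x − x̌, y̌ − x̌⟫| ≤ ‖x − x̌‖·‖y̌ − x̌‖²/(2R) and |⟪y − y̌, y̌ − x̌⟫| ≤ ‖y − y̌‖·‖y̌ − x̌‖²/(2R) hold. Then ‖y̌ − x̌‖ ≤ (1 − a/R)⁻¹·‖y − x‖. -/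
/-- **Upper bound for the distortion of the closest-point projection.** If `x̌`, `y̌` are
the closest-point projections of `x`, `y` onto a set of local reach at least `R`, with
`‖x - x̌‖ ≤ a`, `‖y - y̌‖ ≤ a`, `a < R`, and the normal vectors satisfy Federer's
inner-product bounds against the chord `y̌ - x̌`, then
`‖y̌ - x̌‖ ≤ (1 - a/R)⁻¹ ‖y - x‖`. -/
theorem closest_point_projection_distortion_upper_bound {N : ℕ}
    (x y xc yc : EuclideanSpace ℝ (Fin N))
    (a R : ℝ) (ha0 : 0 ≤ a) (haR : a < R)
    (hx : ‖x - xc‖ ≤ a) (hy : ‖y - yc‖ ≤ a)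
    (hix : |(inner ℝ (x - xc) (yc - xc) : ℝ)| ≤ ‖x - xc‖ * ‖yc - xc‖ ^ 2 / (2 * R))
    (hiy : |(inner ℝ (y - yc) (yc - xc) : ℝ)| ≤ ‖y - yc‖ * ‖yc - xc‖ ^ 2 / (2 * R)) :
    ‖yc - xc‖ ≤ (1 - a / R)⁻¹ * ‖y - x‖ := by
  set d := ‖yc - xc‖ with hd
  have hd0 : 0 ≤ d := norm_nonneg _
  have hR0 : 0 < R := lt_of_le_of_lt ha0 haR
  have hpos : 0 < 1 - a / R := by
    have := (div_lt_one hR0).2 haR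
    linarith
  rcases eq_or_lt_of_le hd0 with h0 | h0
  · rw [← h0]; positivity
  -- decomposition of the inner product
  have hsplit : (inner ℝ (y - x) (yc - xc) : ℝ)
      = inner ℝ (y - yc) (yc - xc) + inner ℝ (yc - xc) (yc - xc)
        - inner ℝ (x - xc) (yc - xc) := by
    rw [← inner_add_left, ← inner_sub_left]
    congr 1
    abel
  have hself : (inner ℝ (yc - xc) (yc - xc) : ℝ) = d ^ 2 := by
    rw [real_inner_self_eq_norm_sq]
  have h2R : (0:ℝ) ≤ 2 * R := by linarith
  have hbx : |(inner ℝ (x - xc) (yc - xc) : ℝ)| ≤ a * d ^ 2 / (2 * R) := by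
    refine hix.trans ?_
    apply div_le_div_of_nonneg_right _ h2R
    exact mul_le_mul_of_nonneg_right hx (by positivity)
  have hby : |(inner ℝ (y - yc) (yc - xc) : ℝ)| ≤ a * d ^ 2 / (2 * R) := by
    refine hiy.trans ?_
    apply div_le_div_of_nonneg_right _ h2R
    exact mul_le_mul_of_nonneg_right hy (by positivity)
  have hlow : d ^ 2 - a * d ^ 2 / R ≤ (inner ℝ (y - x) (yc - xc) : ℝ) := by
    rw [hsplit, hself]
    have h1 := neg_abs_le (inner ℝ (y - yc) (yc - xc) : ℝ)
    have h2 := le_abs_self (inner ℝ (x - xc) (yc - xc) : ℝ)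
    have : a * d ^ 2 / (2 * R) + a * d ^ 2 / (2 * R) = a * d ^ 2 / R := by
      field_simp; ring
    linarith
  have hup : (inner ℝ (y - x) (yc - xc) : ℝ) ≤ ‖y - x‖ * d :=
    real_inner_le_norm _ _
  have key : (1 - a / R) * d ≤ ‖y - x‖ := by
    have h3 : (1 - a / R) * d * d ≤ ‖y - x‖ * d := by
      have : (1 - a / R) * d * d = d ^ 2 - a * d ^ 2 / R := by
        field_simp
      linarith
    exact le_of_mul_le_mul_right h3 h0
  calc d = (1 - a / R)⁻¹ * ((1 - a / R) * d) := (inv_mul_cancel_left₀ (ne_of_gt hpos) d).symm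
    _ ≤ (1 - a / R)⁻¹ * ‖y - x‖ :=
      mul_le_mul_of_nonneg_left key (by positivity)
end

section
/- Chord-length lower bound for a curvature-bounded curve: Let γ : ℝ → EuclideanSpace ℝ (Fin N), let a ≤ b with b − a ≤ πR for some R > 0, and suppose γ is twice differentiable on [a, b] with ‖γ′(s)‖ = 1 and ‖γ″(s)‖ ≤ 1/R for all s ∈ [a, b] (γ is parameterized by arc length with curvature at most 1/R). Then ‖γ(b) − γ(a)‖ ≥ 2R·sin((b − a)/(2R)). -/
open Real Filter RealInnerProductSpace

section Helpers
variable {E : Type*} [NormedAddCommGroup E] [InnerProductSpace ℝ E]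

open Real RealInnerProductSpace
variable {E : Type*} [NormedAddCommGroup E] [InnerProductSpace ℝ E]

lemma inner_tri {u x v : E} (hu : ‖u‖ = 1) (hx : ‖x‖ = 1) (hv : ‖v‖ = 1) :
    ⟪u, x⟫ * ⟪x, v⟫ - Real.sqrt (1 - ⟪u, x⟫^2) * Real.sqrt (1 - ⟪x, v⟫^2) ≤ ⟪u, v⟫ := by
  set c := ⟪u, x⟫ with hc
  set d := ⟪x, v⟫ with hd
  set p := u - c • x with hp
  set q := v - d • x with hq
  have hxx : ⟪x, x⟫ = 1 := by rw [real_inner_self_eq_norm_sq, hx]; ring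
  have hxu : ⟪x, u⟫ = c := by rw [real_inner_comm]
  have hxv : ⟪x, v⟫ = d := rfl
  have hvx : ⟪v, x⟫ = d := by rw [real_inner_comm]
  have huu : ⟪u, u⟫ = 1 := by rw [real_inner_self_eq_norm_sq, hu]; ring
  have hvv : ⟪v, v⟫ = 1 := by rw [real_inner_self_eq_norm_sq, hv]; ring
  have hpq : ⟪p, q⟫ = ⟪u, v⟫ - c * d := by
    simp [hp, hq, inner_sub_left, inner_sub_right, real_inner_smul_left,
      real_inner_smul_right, hxx, hxu, hxv, hvx, hx, ← hc]
  have hpp : ‖p‖^2 = 1 - c^2 := by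
    rw [← real_inner_self_eq_norm_sq]
    simp only [hp, inner_sub_left, inner_sub_right, real_inner_smul_left,
      real_inner_smul_right, hxx, huu, hxu, hvx]
    ring
  have hqq : ‖q‖^2 = 1 - d^2 := by
    rw [← real_inner_self_eq_norm_sq]
    simp only [hq, inner_sub_left, inner_sub_right, real_inner_smul_left,
      real_inner_smul_right, hxx, hvv, hxv, hvx]
    ring
  have h1 : -(‖p‖ * ‖q‖) ≤ ⟪p, q⟫ := neg_le_of_neg_le (by
    have := abs_real_inner_le_norm p q
    linarith [abs_le.mp this |>.1, abs_le.mp this |>.2] )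
  have h2 : ‖p‖ = Real.sqrt (1 - c^2) := by
    rw [← hpp, Real.sqrt_sq (norm_nonneg _)]
  have h3 : ‖q‖ = Real.sqrt (1 - d^2) := by
    rw [← hqq, Real.sqrt_sq (norm_nonneg _)]
  rw [hpq] at h1
  rw [← h2, ← h3]
  linarith

lemma inner_mem (u v : E) (hu : ‖u‖ = 1) (hv : ‖v‖ = 1) : ⟪u, v⟫ ∈ Set.Icc (-1:ℝ) 1 := by
  have h := abs_real_inner_le_norm u v
  rw [hu, hv, mul_one] at h
  exact abs_le.mp h

lemma inner_tri' {u x v : E} (hu : ‖u‖ = 1) (hx : ‖x‖ = 1) (hv : ‖v‖ = 1)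
    (key : ⟪u, x⟫ * ⟪x, v⟫ - Real.sqrt (1 - ⟪u, x⟫^2) * Real.sqrt (1 - ⟪x, v⟫^2) ≤ ⟪u, v⟫) :
    Real.arccos ⟪u, v⟫ ≤ Real.arccos ⟪u, x⟫ + Real.arccos ⟪x, v⟫ := by
  set A := Real.arccos ⟪u, x⟫ with hA
  set B := Real.arccos ⟪x, v⟫ with hB
  rcases le_or_gt π (A + B) with h | h
  · exact le_trans (Real.arccos_le_pi _) h
  · have hux := inner_mem u x hu hx
    have hxv := inner_mem x v hx hv
    have huv := inner_mem u v hu hv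
    have hcos : Real.cos (A + B) ≤ ⟪u, v⟫ := by
      rw [Real.cos_add, hA, hB, Real.cos_arccos hux.1 hux.2, Real.cos_arccos hxv.1 hxv.2,
        Real.sin_arccos, Real.sin_arccos]
      exact key
    have hAB0 : 0 ≤ A + B := add_nonneg (Real.arccos_nonneg _) (Real.arccos_nonneg _)
    calc Real.arccos ⟪u, v⟫ ≤ Real.arccos (Real.cos (A + B)) := by
          rw [Real.arccos_eq_pi_div_two_sub_arcsin, Real.arccos_eq_pi_div_two_sub_arcsin]
          linarith [Real.monotone_arcsin hcos]
      _ = A + B := Real.arccos_cos hAB0 h.le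

lemma arccos_inner_eq {u w : E} (hu : ‖u‖ = 1) (hw : ‖w‖ = 1) :
    Real.arccos ⟪u, w⟫ = 2 * Real.arcsin (‖u - w‖ / 2) := by
  have hn : ‖u - w‖^2 = 2 - 2 * ⟪u, w⟫ := by
    rw [@norm_sub_sq_real, hu, hw]; ring
  set y := ‖u - w‖ / 2 with hy
  have hy0 : 0 ≤ y := by positivity
  have hy1 : y ≤ 1 := by
    have : ‖u - w‖ ≤ 2 := by
      calc ‖u - w‖ ≤ ‖u‖ + ‖w‖ := norm_sub_le _ _
        _ = 2 := by rw [hu, hw]; norm_num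
    simp [hy]; linarith
  have h2y : ‖u - w‖ = 2*y := by rw [hy]; ring
  rw [h2y] at hn
  have huw : ⟪u, w⟫ = 1 - 2 * y^2 := by nlinarith [hn]
  have hcos : Real.cos (2 * Real.arcsin y) = 1 - 2 * y^2 := by
    rw [Real.cos_two_mul, Real.cos_arcsin, Real.sq_sqrt (by nlinarith : (0:ℝ) ≤ 1 - y^2)]
    ring
  rw [huw, ← hcos, Real.arccos_cos]
  · exact mul_nonneg two_pos.le (Real.arcsin_nonneg.mpr hy0)
  · have : Real.arcsin y ≤ π / 2 := Real.arcsin_le_pi_div_two y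
    linarith

end Helpers


lemma tendsto_n_arcsin (c : ℝ) :
    Tendsto (fun n : ℕ => ((n:ℝ)+1) * Real.arcsin (c/((n:ℝ)+1))) atTop (nhds c) := by
  rcases eq_or_ne c 0 with rfl | hc
  · simpa using tendsto_const_nhds (x := (0:ℝ)) (f := atTop (α := ℕ))
  · have hd : HasDerivAt Real.arcsin 1 0 := by
      have := Real.hasDerivAt_arcsin (by norm_num : (0:ℝ) ≠ -1) (by norm_num : (0:ℝ) ≠ 1)
      simpa using this
    have hslope := hasDerivAt_iff_tendsto_slope.mp hd
    have hg : Tendsto (fun n : ℕ => c/((n:ℝ)+1)) atTop (nhdsWithin 0 {(0:ℝ)}ᶜ) := by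
      apply tendsto_nhdsWithin_of_tendsto_nhds_of_eventually_within
      · have : Tendsto (fun n : ℕ => ((n:ℝ)+1)) atTop atTop :=
          tendsto_atTop_add_const_right _ 1 tendsto_natCast_atTop_atTop
        simpa using Tendsto.div_atTop (tendsto_const_nhds (x := c)) this
      · filter_upwards [] with n
        have : ((n:ℝ)+1) ≠ 0 := by positivity
        simp [div_eq_zero_iff, this, hc]
    have hcomp := hslope.comp hg
    have heq : ∀ n : ℕ, c * (slope Real.arcsin 0 (c/((n:ℝ)+1))) =
        ((n:ℝ)+1) * Real.arcsin (c/((n:ℝ)+1)) := by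
      intro n
      have hn : ((n:ℝ)+1) ≠ 0 := by positivity
      rw [slope_def_field]
      field_simp [Real.arcsin_zero]
      rw [Real.arcsin_zero, mul_zero, sub_zero, sub_zero, mul_div_cancel_left₀ _ hc]
    have := (hcomp.const_mul c)
    rw [mul_one] at this
    refine Tendsto.congr (fun n => heq n) this


/-- **Chord-length lower bound for a curvature-bounded curve.** If `γ` is parameterized by
arc length on `[a, b]` with curvature at most `1/R` and `b - a ≤ πR`, then
`‖γ b - γ a‖ ≥ 2R · sin((b - a)/(2R))`. -/
theorem chord_length_lower_bound {N : ℕ}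
    (γ γ' γ'' : ℝ → EuclideanSpace ℝ (Fin N))
    (a b R : ℝ) (hab : a ≤ b) (hR : 0 < R) (hlen : b - a ≤ Real.pi * R)
    (hd1 : ∀ s ∈ Set.Icc a b, HasDerivWithinAt γ (γ' s) (Set.Icc a b) s)
    (hd2 : ∀ s ∈ Set.Icc a b, HasDerivWithinAt γ' (γ'' s) (Set.Icc a b) s)
    (hunit : ∀ s ∈ Set.Icc a b, ‖γ' s‖ = 1)
    (hcurv : ∀ s ∈ Set.Icc a b, ‖γ'' s‖ ≤ 1 / R) :
    2 * R * Real.sin ((b - a) / (2 * R)) ≤ ‖γ b - γ a‖ := by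
  set I := Set.Icc a b with hI
  set m := (a + b) / 2 with hm
  have hmI : m ∈ I := ⟨by rw [hm]; linarith, by rw [hm]; linarith⟩
  -- Lipschitz bound on tangent
  have hLip : ∀ s ∈ I, ∀ t ∈ I, ‖γ' t - γ' s‖ ≤ (1/R) * ‖t - s‖ := by
    intro s hs t ht
    exact (convex_Icc a b).norm_image_sub_le_of_norm_hasDerivWithin_le hd2 hcurv hs ht
  -- one-step angle bound
  have stepA : ∀ s ∈ I, ∀ t ∈ I, s ≤ t →
      Real.arccos ⟪γ' s, γ' t⟫ ≤ 2 * Real.arcsin ((t - s)/(2*R)) := by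
    intro s hs t ht hst
    rw [arccos_inner_eq (hunit s hs) (hunit t ht)]
    have h1 : ‖γ' s - γ' t‖ ≤ (1/R) * ‖s - t‖ := hLip t ht s hs
    have h2 : ‖s - t‖ = t - s := by
      rw [Real.norm_eq_abs, abs_sub_comm]; exact abs_of_nonneg (by linarith)
    have h3 : ‖γ' s - γ' t‖ / 2 ≤ (t - s)/(2*R) := by
      rw [h2] at h1
      rw [div_le_div_iff₀ two_pos (by positivity)]
      calc ‖γ' s - γ' t‖ * (2*R) = (‖γ' s - γ' t‖ * R) * 2 := by ring
        _ ≤ ((1/R) * (t-s) * R) * 2 := by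
            have : ‖γ' s - γ' t‖ * R ≤ (1/R)*(t-s) * R :=
              mul_le_mul_of_nonneg_right h1 hR.le
            linarith
        _ = (t - s) * 2 := by field_simp
    have := Real.monotone_arcsin h3
    linarith
  -- iterated angle bound
  have stepB : ∀ n : ℕ, ∀ s ∈ I, ∀ t ∈ I, s ≤ t →
      Real.arccos ⟪γ' s, γ' t⟫ ≤ ((n:ℝ)+1) * (2 * Real.arcsin ((t - s)/(2*R*((n:ℝ)+1)))) := by
    intro n
    induction n with
    | zero => intro s hs t ht hst; simpa using stepA s hs t ht hst
    | succ n ih =>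
      intro s hs t ht hst
      set h := (t - s)/((n:ℝ)+2) with hh
      have hn2 : (0:ℝ) < (n:ℝ)+2 := by positivity
      have hh0 : 0 ≤ h := div_nonneg (by linarith) hn2.le
      set x := s + ((n:ℝ)+1) * h with hx
      have hxs : s ≤ x := by nlinarith
      have hxt : x ≤ t := by
        have : x = t - h := by rw [hx, hh]; field_simp; ring
        linarith
      have hxI : x ∈ I := ⟨le_trans hs.1 hxs, le_trans hxt ht.2⟩
      have tri : Real.arccos ⟪γ' s, γ' t⟫ ≤
          Real.arccos ⟪γ' s, γ' x⟫ + Real.arccos ⟪γ' x, γ' t⟫ :=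
        inner_tri' (hunit s hs) (hunit x hxI) (hunit t ht)
          (inner_tri (hunit s hs) (hunit x hxI) (hunit t ht))
      have e1 : (x - s)/(2*R*((n:ℝ)+1)) = h/(2*R) := by
        rw [hx]; field_simp; ring
      have e2 : (t - x)/(2*R) = h/(2*R) := by
        have hsum : ((n:ℝ)+2) * h = t - s := by rw [hh, mul_div_cancel₀ _ hn2.ne']
        have : t - x = h := by rw [hx]; linarith
        rw [this]
      have b1 := ih s hs x hxI hxs
      rw [e1] at b1
      have b2 := stepA x hxI t ht hxt
      rw [e2] at b2
      have e3 : (t - s)/(2*R*((n:ℝ)+1+1)) = h/(2*R) := by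
        rw [hh, div_div]; congr 1; ring
      push_cast
      rw [e3]
      linarith
  -- Lipschitz bound for the angle
  have stepC : ∀ s ∈ I, ∀ t ∈ I, s ≤ t →
      Real.arccos ⟪γ' s, γ' t⟫ ≤ (t - s)/R := by
    intro s hs t ht hst
    set c := (t - s)/(2*R) with hc
    have hlim : Tendsto (fun n : ℕ => ((n:ℝ)+1) * (2 * Real.arcsin (c/((n:ℝ)+1))))
        atTop (nhds ((t-s)/R)) := by
      have := (tendsto_n_arcsin c).const_mul 2
      have he : (2:ℝ) * c = (t-s)/R := by rw [hc]; field_simp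
      rw [← he]
      refine Tendsto.congr (fun n => by ring) this
    refine ge_of_tendsto hlim ?_
    filter_upwards [] with n
    have := stepB n s hs t ht hst
    have harg : (t - s)/(2*R*((n:ℝ)+1)) = c/((n:ℝ)+1) := by
      rw [hc]; field_simp
    rw [harg] at this
    exact this
  -- pointwise cosine bound
  have stepD : ∀ s ∈ I, Real.cos ((s - m)/R) ≤ ⟪γ' m, γ' s⟫ := by
    intro s hs
    have hbound : Real.arccos ⟪γ' m, γ' s⟫ ≤ |s - m|/R := by
      rcases le_total m s with h | h
      · have := stepC m hmI s hs h
        rwa [abs_of_nonneg (by linarith)]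
      · have := stepC s hs m hmI h
        rw [real_inner_comm]
        rw [abs_of_nonpos (by linarith)]
        convert this using 2
        ring
    have hmem := inner_mem (γ' m) (γ' s) (hunit m hmI) (hunit s hs)
    have habs : |s - m| ≤ (b - a)/2 := by
      rw [abs_le, hm]
      exact ⟨by linarith [hs.1], by linarith [hs.2]⟩
    have hpi : |s - m|/R ≤ π := by
      rw [div_le_iff₀ hR]
      have : (b-a)/2 ≤ π * R / 2 := by linarith
      nlinarith [Real.pi_pos]
    calc Real.cos ((s - m)/R) = Real.cos (|s - m|/R) := by
          rw [← Real.cos_abs ((s-m)/R), abs_div, abs_of_pos hR]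
      _ ≤ Real.cos (Real.arccos ⟪γ' m, γ' s⟫) :=
          Real.cos_le_cos_of_nonneg_of_le_pi (Real.arccos_nonneg _) hpi hbound
      _ = ⟪γ' m, γ' s⟫ := Real.cos_arccos hmem.1 hmem.2
  -- continuity facts
  have hcontT : ContinuousOn γ' I := fun s hs => (hd2 s hs).continuousWithinAt
  have hcontG : ContinuousOn γ I := fun s hs => (hd1 s hs).continuousWithinAt
  -- FTC for the inner product with the middle tangent
  set L : EuclideanSpace ℝ (Fin N) →L[ℝ] ℝ := innerSL ℝ (γ' m) with hL
  have hFTC : ∫ s in a..b, ⟪γ' m, γ' s⟫ = ⟪γ' m, γ b⟫ - ⟪γ' m, γ a⟫ := by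
    have hderiv : ∀ s ∈ Set.Ioo a b,
        HasDerivWithinAt (fun s => ⟪γ' m, γ s⟫) (⟪γ' m, γ' s⟫) (Set.Ioi s) s := by
      intro s hs
      have h1 : HasDerivWithinAt (fun s => ⟪γ' m, γ s⟫) (⟪γ' m, γ' s⟫) I s := by
        have := L.hasFDerivAt.comp_hasDerivWithinAt s (hd1 s (Set.Ioo_subset_Icc_self hs))
        exact this
      have h2 : HasDerivAt (fun s => ⟪γ' m, γ s⟫) (⟪γ' m, γ' s⟫) s :=
        h1.hasDerivAt (Icc_mem_nhds hs.1 hs.2)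
      exact h2.hasDerivWithinAt
    have hcont : ContinuousOn (fun s => ⟪γ' m, γ s⟫) (Set.Icc a b) :=
      (L.continuous.comp_continuousOn hcontG)
    have hint : IntervalIntegrable (fun s => ⟪γ' m, γ' s⟫) MeasureTheory.volume a b := by
      apply ContinuousOn.intervalIntegrable
      rw [Set.uIcc_of_le hab]
      exact L.continuous.comp_continuousOn hcontT
    exact intervalIntegral.integral_eq_sub_of_hasDeriv_right_of_le hab hcont hderiv hint
  -- compare integrals
  have hintT : IntervalIntegrable (fun s => ⟪γ' m, γ' s⟫) MeasureTheory.volume a b := by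
    apply ContinuousOn.intervalIntegrable
    rw [Set.uIcc_of_le hab]
    exact L.continuous.comp_continuousOn hcontT
  have hintC : IntervalIntegrable (fun s => Real.cos ((s - m)/R)) MeasureTheory.volume a b :=
    (Continuous.intervalIntegrable (Real.continuous_cos.comp ((continuous_id.sub continuous_const).div_const R)) a b)
  have hmono : ∫ s in a..b, Real.cos ((s - m)/R) ≤ ∫ s in a..b, ⟪γ' m, γ' s⟫ := by
    apply intervalIntegral.integral_mono_on hab hintC hintT
    intro s hs
    exact stepD s hs
  -- compute the cosine integral
  have hcos_int : ∫ s in a..b, Real.cos ((s - m)/R) = 2 * R * Real.sin ((b - a)/(2*R)) := by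
    have hF : ∀ s ∈ Set.uIcc a b, HasDerivAt (fun s => R * Real.sin ((s - m)/R))
        (Real.cos ((s - m)/R)) s := by
      intro s _
      have h1 : HasDerivAt (fun s : ℝ => (s - m)/R) (1/R) s :=
        ((hasDerivAt_id s).sub_const m).div_const R
      have h2 := (h1.sin).const_mul R
      have h3 : R * (Real.cos ((s - m)/R) * (1/R)) = Real.cos ((s - m)/R) := by field_simp
      rw [h3] at h2; exact h2
    rw [intervalIntegral.integral_eq_sub_of_hasDerivAt hF hintC]
    have e1 : (b - m)/R = (b - a)/(2*R) := by rw [hm]; field_simp; ring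
    have e2 : (a - m)/R = -((b - a)/(2*R)) := by rw [hm]; field_simp; ring
    rw [e1, e2, Real.sin_neg]
    ring
  -- finish
  have hfinal : 2 * R * Real.sin ((b - a)/(2*R)) ≤ ⟪γ' m, γ b - γ a⟫ := by
    rw [inner_sub_right, ← hFTC, ← hcos_int]
    exact hmono
  calc 2 * R * Real.sin ((b - a)/(2*R)) ≤ ⟪γ' m, γ b - γ a⟫ := hfinal
    _ ≤ ‖γ' m‖ * ‖γ b - γ a‖ := real_inner_le_norm _ _
    _ = ‖γ b - γ a‖ := by rw [hunit m hmI, one_mul]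
end

section
/- Empty tangent ball: Let M ⊆ E := EuclideanSpace ℝ (Fin N), let y ∈ M, let u ∈ E with ‖u‖ = 1, and let r > 0. Suppose that for every s with 0 < s < r and every z ∈ M, ‖(y + s•u) − z‖ ≥ s (i.e. y is a nearest point of M to y + s•u). Then the open ball of radius r centred at y + r•u contains no point of M: M ∩ Metric.ball (y + r•u) r = ∅. -/
/-- **Empty tangent ball.** If for every `0 < s < r` the point `y` is a nearest point of
`M` to `y + s•u` (with `u` a unit vector), then the open ball of radius `r` centred at
`y + r•u`, tangent to `M` at `y`, contains no point of `M`. -/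
theorem empty_tangent_ball {N : ℕ}
    (M : Set (EuclideanSpace ℝ (Fin N)))
    (y : EuclideanSpace ℝ (Fin N)) (hy : y ∈ M)
    (u : EuclideanSpace ℝ (Fin N)) (hu : ‖u‖ = 1)
    (r : ℝ) (hr : 0 < r)
    (hnear : ∀ s : ℝ, 0 < s → s < r → ∀ z ∈ M, s ≤ ‖(y + s • u) - z‖) :
    M ∩ Metric.ball (y + r • u) r = ∅ := by
  ext z
  simp only [Set.mem_inter_iff, Set.mem_empty_iff_false, iff_false, not_and]
  intro hzM hzB
  rw [Metric.mem_ball, dist_comm, dist_eq_norm] at hzB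
  set d : ℝ := ‖(y + r • u) - z‖ with hd
  have hd0 : 0 ≤ d := norm_nonneg _
  set c : ℝ := (d + r) / 2 with hc
  have hcr : c < r := by rw [hc]; linarith
  set s : ℝ := (c + r) / 2 with hs
  have hcs : c < s := by rw [hs]; linarith
  have hs0 : 0 < s := by rw [hs, hc]; linarith
  have hsr : s < r := by rw [hs]; linarith
  have key := hnear s hs0 hsr z hzM
  have heq : (y + s • u) - z = ((y + r • u) - z) + (s - r) • u := by module
  have hle : ‖(y + s • u) - z‖ ≤ d + (r - s) := by
    rw [heq]
    calc ‖((y + r • u) - z) + (s - r) • u‖ ≤ ‖(y + r • u) - z‖ + ‖(s - r) • u‖ :=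
          norm_add_le _ _
      _ = d + (r - s) := by
          rw [norm_smul, hu, Real.norm_eq_abs, abs_of_nonpos (by linarith)]
          ring
  have : s ≤ c := by rw [hc]; linarith
  linarith
end
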